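/- arXiv:2010.09357 — 10 statements merged into one kernel-verified Lean document; each statement's English description precedes it below -/
import Mathlib

section
/- Let X be a real Banach space and let x ∈ S_X be a Δ-point. Then for every ε > 0 and every slice S(f, α) of B_X (with f ∈ X*, ‖f‖ = 1 and 0 < α < 1) such that x ∈ S(f, α) and α/(1 − α) < ε, there exist g ∈ X* with ‖g‖ = 1 and α₁ > 0 such that S(g, α₁) ⊆ S(f, α) and ‖x − z‖ ≥ 2 − ε for all z ∈ S(g, α₁). -/
variable {X : Type*} [NormedAddCommGroup X] [NormedSpace ℝ X] [CompleteSpace X]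

/-- The ballSlice `S(f, α)` of the closed unit ball of `X`. -/
def ballSlice (f : X →L[ℝ] ℝ) (α : ℝ) : Set X := {y | ‖y‖ ≤ 1 ∧ f y > 1 - α}

/-- `x` is a Δ-point: for every ballSlice of the unit ball containing `x` and every `ε > 0`
there is a point of the ballSlice at distance `> 2 - ε` from `x`. -/
def IsDeltaPoint (x : X) : Prop :=
  ∀ (f : X →L[ℝ] ℝ), ‖f‖ = 1 → ∀ α : ℝ, 0 < α → x ∈ ballSlice f α →
    ∀ ε : ℝ, 0 < ε → ∃ y ∈ ballSlice f α, ‖x - y‖ > 2 - ε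

theorem delta_point_nested_slice (x : X) (hx : ‖x‖ = 1) (hΔ : IsDeltaPoint x)
    (ε : ℝ) (hε : 0 < ε) (f : X →L[ℝ] ℝ) (hf : ‖f‖ = 1)
    (α : ℝ) (hα0 : 0 < α) (hα1 : α < 1) (hxS : x ∈ ballSlice f α)
    (hαε : α / (1 - α) < ε) :
    ∃ (g : X →L[ℝ] ℝ) (α₁ : ℝ), ‖g‖ = 1 ∧ 0 < α₁ ∧
      ballSlice g α₁ ⊆ ballSlice f α ∧ ∀ z ∈ ballSlice g α₁, ‖x - z‖ ≥ 2 - ε := by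
  obtain ⟨hx1, hfx⟩ := hxS
  have hfx1 : f x ≤ 1 := by
    have := f.le_opNorm x
    rw [hf, hx] at this
    calc f x ≤ |f x| := le_abs_self _
      _ ≤ 1 * 1 := this
      _ = 1 := by ring
  set s : ℝ := f x - (1 - α) with hs
  have hs0 : 0 < s := by simp only [hs]; linarith
  have hsα : s ≤ α := by simp only [hs]; linarith
  have hαε' : α < ε := by
    have h1 : 0 < 1 - α := by linarith
    have h2 : α < ε * (1 - α) := (div_lt_iff₀ h1).mp hαε
    nlinarith
  set α' : ℝ := α - s / 2 with hα'
  have hα'0 : 0 < α' := by simp only [hα']; linarith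
  have hα'α : α' ≤ α := by simp only [hα']; linarith
  set δ : ℝ := min (s / 4) ((ε - α) / 4) with hδ
  have hδ0 : 0 < δ := lt_min (by linarith) (by linarith)
  have hδs : δ ≤ s / 4 := min_le_left _ _
  have hδε : δ ≤ (ε - α) / 4 := min_le_right _ _
  have hδ1 : δ < 1 := by linarith
  have hxS' : x ∈ ballSlice f α' := ⟨hx1, by simp only [hα']; linarith⟩
  obtain ⟨y, ⟨hy1, hfy⟩, hxy⟩ := hΔ f hf α' hα'0 hxS' δ hδ0
  have hxyne : x - y ≠ 0 := by
    intro h0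
    rw [h0, norm_zero] at hxy
    linarith
  obtain ⟨h, hh1, hhxy⟩ := exists_dual_vector ℝ (x - y) (norm_ne_zero_iff.mpr hxyne)
  have hhxy' : h (x - y) = ‖x - y‖ := by exact_mod_cast hhxy
  have habs : ∀ w : X, ‖w‖ ≤ 1 → |h w| ≤ 1 := by
    intro w hw
    have := h.le_opNorm w
    rw [hh1, one_mul] at this
    calc |h w| = ‖h w‖ := rfl
      _ ≤ ‖w‖ := this
      _ ≤ 1 := hw
  have hfabs : ∀ w : X, ‖w‖ ≤ 1 → |f w| ≤ 1 := by
    intro w hw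
    have := f.le_opNorm w
    rw [hf, one_mul] at this
    calc |f w| = ‖f w‖ := rfl
      _ ≤ ‖w‖ := this
      _ ≤ 1 := hw
  have hhx : h x > 1 - δ := by
    have hxeq : h x - h y = ‖x - y‖ := by rw [← map_sub]; exact hhxy'
    have hy' : h y ≥ -1 := neg_le_of_abs_le (habs y hy1)
    linarith
  have hhy : h y < δ - 1 := by
    have hxeq : h x - h y = ‖x - y‖ := by rw [← map_sub]; exact hhxy'
    have hx' : h x ≤ 1 := le_of_abs_le (habs x (by rw [hx]))
    linarith
  set N : ℝ := ‖f - h‖ with hN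
  have hNy : f y - h y ≤ N := by
    have h1 := (f - h).le_opNorm y
    have h2 : ‖(f - h) y‖ ≤ N := by
      calc ‖(f - h) y‖ ≤ N * ‖y‖ := h1
        _ ≤ N * 1 := by
            apply mul_le_mul_of_nonneg_left hy1 (norm_nonneg _)
        _ = N := mul_one N
    have h3 : (f - h) y = f y - h y := rfl
    calc f y - h y = (f - h) y := h3.symm
      _ ≤ |(f - h) y| := le_abs_self _
      _ = ‖(f - h) y‖ := rfl
      _ ≤ N := h2
  have hNlb : N > 2 - α' - δ := by
    have : f y - h y > (1 - α') + (1 - δ) := by linarith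
    linarith
  have hN0 : 0 < N := by linarith
  set c : ℝ := 2 - α' - 2 * δ with hc
  have hc0 : 0 < c := by simp only [hc]; linarith
  have hcN : c < N := by simp only [hc]; linarith
  have hNne : N ≠ 0 := ne_of_gt hN0
  have key : ∀ z : X, (N⁻¹ • (f - h)) z > 1 - (N - c) / N → f z - h z > c := by
    intro z hgz
    simp only [ContinuousLinearMap.smul_apply, ContinuousLinearMap.sub_apply,
      smul_eq_mul] at hgz
    have hfrac : (1 : ℝ) - (N - c) / N = c / N := by field_simp; ring
    rw [hfrac] at hgz
    have h1 : c < N⁻¹ * (f z - h z) * N := (div_lt_iff₀ hN0).mp hgz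
    have h2 : N⁻¹ * (f z - h z) * N = f z - h z := by field_simp
    rw [h2] at h1
    exact h1
  refine ⟨N⁻¹ • (f - h), (N - c) / N, ?_, ?_, ?_, ?_⟩
  · have : ‖N⁻¹ • (f - h)‖ = ‖(N⁻¹ : ℝ)‖ * ‖f - h‖ := norm_smul (β := X →L[ℝ] ℝ) _ _
    rw [this, Real.norm_eq_abs, abs_inv, abs_of_pos hN0, ← hN]
    field_simp
  · exact div_pos (by linarith) hN0
  · rintro z ⟨hz1, hgz⟩
    have hfh : f z - h z > c := key z hgz
    have hz' : h z ≥ -1 := neg_le_of_abs_le (habs z hz1)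
    refine ⟨hz1, ?_⟩
    simp only [hc] at hfh
    have hfz : f z > 1 - α' - 2 * δ := by linarith
    simp only [hα'] at hfz
    linarith
  · rintro z ⟨hz1, hgz⟩
    have hfh : f z - h z > c := key z hgz
    have hfz : f z ≤ 1 := le_of_abs_le (hfabs z hz1)
    have hhz : h z < 1 - c := by linarith
    have hbound : h x - h z ≤ ‖x - z‖ := by
      have h1 : h (x - z) = h x - h z := map_sub h x z
      have h2 := h.le_opNorm (x - z)
      rw [hh1, one_mul] at h2
      calc h x - h z = h (x - z) := h1.symm
        _ ≤ |h (x - z)| := le_abs_self _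
        _ = ‖h (x - z)‖ := rfl
        _ ≤ ‖x - z‖ := h2
    have hgt : ‖x - z‖ > c - δ := by linarith
    simp only [hc, hα'] at hgt
    linarith
end

section
/- Let X be a real Banach space and x ∈ S_X. Then x is a Δ-point if and only if for every ε > 0 and every slice S(f, α) of B_X (with f ∈ X*, ‖f‖ = 1, α > 0) such that x ∈ S(f, α), there exist g ∈ X* with ‖g‖ = 1 and α₁ > 0 such that S(g, α₁) ⊆ S(f, α) and ‖x − z‖ ≥ 2 − ε for all z ∈ S(g, α₁). -/
variable {X : Type*} [NormedAddCommGroup X] [NormedSpace ℝ X] [CompleteSpace X]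

set_option linter.unusedSectionVars false in
/-- If `‖g‖ = 1` and `‖v‖ ≤ 1` then `|g v| ≤ 1`. -/
lemma abs_apply_le_one' (g : X →L[ℝ] ℝ) (hg : ‖g‖ = 1) {v : X} (hv : ‖v‖ ≤ 1) :
    |g v| ≤ 1 := by
  have h := g.le_opNorm v
  rw [hg, one_mul, Real.norm_eq_abs] at h
  exact h.trans hv

theorem delta_point_iff_nested_slices (x : X) (hx : ‖x‖ = 1) :
    IsDeltaPoint x ↔
      ∀ ε : ℝ, 0 < ε → ∀ (f : X →L[ℝ] ℝ), ‖f‖ = 1 → ∀ α : ℝ, 0 < α →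
        x ∈ ballSlice f α →
        ∃ (g : X →L[ℝ] ℝ) (α₁ : ℝ), ‖g‖ = 1 ∧ 0 < α₁ ∧
          ballSlice g α₁ ⊆ ballSlice f α ∧ ∀ z ∈ ballSlice g α₁, ‖x - z‖ ≥ 2 - ε := by
  constructor
  · -- forward direction
    intro hΔ ε hε f hf α hα hxS
    obtain ⟨hx1, hfx⟩ := hxS
    have hfx1 : f x ≤ 1 := le_trans (le_abs_self _) (abs_apply_le_one' f hf hx1)
    obtain ⟨ε', hε'def⟩ : ∃ e : ℝ, e = min ε 1 := ⟨_, rfl⟩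
    have hε'0 : 0 < ε' := hε'def ▸ lt_min hε one_pos
    have hε'1 : ε' ≤ 1 := hε'def ▸ min_le_right _ _
    have hε'ε : ε' ≤ ε := hε'def ▸ min_le_left _ _
    obtain ⟨β, hβdef⟩ : ∃ b : ℝ, b = 1 - f x := ⟨_, rfl⟩
    have hβ0 : 0 ≤ β := by rw [hβdef]; linarith
    have hβα : β < α := by rw [hβdef]; linarith
    have hβ2 : β ≤ 2 := by
      have := (abs_le.mp (abs_apply_le_one' f hf hx1)).1
      rw [hβdef]; linarith
    obtain ⟨m, hmdef⟩ : ∃ m : ℝ, m = min (α - β) 1 := ⟨_, rfl⟩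
    have hm0 : 0 < m := hmdef ▸ lt_min (by linarith) one_pos
    have hm1 : m ≤ 1 := hmdef ▸ min_le_right _ _
    have hmαβ : m ≤ α - β := hmdef ▸ min_le_left _ _
    obtain ⟨α'', hα''def⟩ : ∃ a : ℝ, a = β + m / 2 := ⟨_, rfl⟩
    have hα''0 : 0 < α'' := by rw [hα''def]; positivity
    have hα''b : α'' ≤ 5 / 2 := by rw [hα''def]; linarith
    obtain ⟨η, hηdef⟩ : ∃ e : ℝ, e = m / 8 := ⟨_, rfl⟩
    have hη0 : 0 < η := by rw [hηdef]; positivity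
    have hη1 : η ≤ 1 := by rw [hηdef]; linarith
    obtain ⟨t, htdef⟩ : ∃ t : ℝ, t = 4 * (α'' + 1) / ε' := ⟨_, rfl⟩
    have ht0 : 0 < t := by rw [htdef]; positivity
    have ht4 : 4 ≤ t := by
      rw [htdef, le_div_iff₀ hε'0]; nlinarith
    have htq : t * (ε' / 4) = α'' + 1 := by
      rw [htdef]; field_simp
    obtain ⟨δ, hδdef⟩ : ∃ d : ℝ, d = min (m / (8 * t)) (min (ε' / 8) (1 / 2)) := ⟨_, rfl⟩
    have hδ0 : 0 < δ :=
      hδdef ▸ lt_min (by positivity) (lt_min (by positivity) (by norm_num))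
    have hδhalf : δ ≤ 1 / 2 := hδdef ▸ le_trans (min_le_right _ _) (min_le_right _ _)
    have hδε : δ ≤ ε' / 8 := hδdef ▸ le_trans (min_le_right _ _) (min_le_left _ _)
    have hδm : t * δ ≤ m / 8 := by
      have h1 : δ ≤ m / (8 * t) := hδdef ▸ min_le_left _ _
      have h2 : t * (m / (8 * t)) = m / 8 := by field_simp
      nlinarith
    -- apply the Δ-point property to the slice S(f, α'')
    have hxS'' : x ∈ ballSlice f α'' := by
      refine ⟨hx1, ?_⟩
      have hfxβ : f x = 1 - β := by rw [hβdef]; ring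
      rw [hα''def]; linarith
    obtain ⟨y, ⟨hy1, hfy⟩, hxy⟩ := hΔ f hf α'' hα''0 hxS'' δ hδ0
    have hyx0 : y - x ≠ 0 := by
      intro hc
      have h1 : ‖x - y‖ = ‖y - x‖ := norm_sub_rev _ _
      rw [hc, norm_zero] at h1
      rw [h1] at hxy
      linarith
    obtain ⟨g, hg1, hgval⟩ := exists_dual_vector ℝ (y - x) (norm_ne_zero_iff.mpr hyx0)
    have hgyx : g (y - x) > 2 - δ := by
      rw [hgval, ← norm_sub_rev x y]; exact hxy
    have hgx1 : -1 ≤ g x := (abs_le.mp (abs_apply_le_one' g hg1 hx1)).1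
    have hgy1 : g y ≤ 1 := le_trans (le_abs_self _) (abs_apply_le_one' g hg1 hy1)
    have hgsub : g y - g x > 2 - δ := by rw [← map_sub]; exact hgyx
    have hgx : g x < δ - 1 := by linarith
    have hgy : g y > 1 - δ := by linarith
    -- the combined functional
    obtain ⟨h, hhdef⟩ : ∃ h' : X →L[ℝ] ℝ, h' = f + t • g := ⟨_, rfl⟩
    have happ : ∀ v : X, h v = f v + t * g v := by
      intro v; rw [hhdef]; simp
    have hfy1 : f y ≥ -1 := (abs_le.mp (abs_apply_le_one' f hf hy1)).1
    have hhy : h y > 1 - α'' + t * (1 - δ) := by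
      have h2 : t * (1 - δ) ≤ t * g y := mul_le_mul_of_nonneg_left hgy.le ht0.le
      rw [happ]; linarith
    have hhy0 : 0 < h y := by
      have h2 : (4 : ℝ) * (1 / 2) ≤ t * (1 - δ) :=
        mul_le_mul ht4 (by linarith) (by norm_num) (by linarith)
      linarith
    have hhnorm : h y ≤ ‖h‖ := by
      have h1 := h.le_opNorm y
      rw [Real.norm_eq_abs] at h1
      have h2 : ‖h‖ * ‖y‖ ≤ ‖h‖ * 1 := mul_le_mul_of_nonneg_left hy1 (norm_nonneg h)
      rw [mul_one] at h2
      linarith [le_abs_self (h y)]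
    have hh0 : 0 < ‖h‖ := lt_of_lt_of_le hhy0 hhnorm
    have key : ∀ z ∈ ballSlice (‖h‖⁻¹ • h) (η / ‖h‖),
        ‖z‖ ≤ 1 ∧ f z > 1 - α ∧ ‖x - z‖ ≥ 2 - ε := by
      intro z hz
      obtain ⟨hz1, hzval⟩ := hz
      rw [ContinuousLinearMap.smul_apply, smul_eq_mul] at hzval
      have hzval' : h z > ‖h‖ - η := by
        have h2 : ‖h‖ * (‖h‖⁻¹ * h z) > ‖h‖ * (1 - η / ‖h‖) :=
          (mul_lt_mul_iff_right₀ hh0).mpr hzval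
        rw [← mul_assoc, mul_inv_cancel₀ hh0.ne', one_mul] at h2
        have h3 : ‖h‖ * (1 - η / ‖h‖) = ‖h‖ - η := by field_simp
        linarith
      have hzlow : h z > 1 - α'' + t * (1 - δ) - η := by linarith
      have hfz1 : f z ≤ 1 := le_trans (le_abs_self _) (abs_apply_le_one' f hf hz1)
      have hgz1 : g z ≤ 1 := le_trans (le_abs_self _) (abs_apply_le_one' g hg1 hz1)
      have hzsum : f z + t * g z > 1 - α'' + t * (1 - δ) - η := by
        rw [← happ]; exact hzlow
      have hexp : t * (1 - δ) = t - t * δ := by ring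
      -- f z is large
      have hfzbig : f z > 1 - α := by
        have h2 : t * g z ≤ t * 1 := mul_le_mul_of_nonneg_left hgz1 ht0.le
        have h3 : f z > 1 - α'' - t * δ - η := by linarith
        rw [hα''def, hηdef] at h3
        linarith
      -- g z is large: t * g z > t*(1-δ) - (α'' + η) ≥ t*(1 - δ - ε'/4)
      have h4 : t * (1 - δ - ε' / 4) < t * g z := by
        have h5 : t * (1 - δ - ε' / 4) = t * (1 - δ) - t * (ε' / 4) := by ring
        linarith
      have hgzbig : 1 - δ - ε' / 4 < g z := (mul_lt_mul_iff_right₀ ht0).mp h4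
      -- z is far from x
      have hgzx : g z - g x > 2 - ε := by linarith
      have h6 : g (z - x) ≤ ‖z - x‖ := by
        have h7 := g.le_opNorm (z - x)
        rw [hg1, one_mul, Real.norm_eq_abs] at h7
        exact le_trans (le_abs_self _) h7
      rw [map_sub] at h6
      have h8 : ‖x - z‖ = ‖z - x‖ := norm_sub_rev _ _
      exact ⟨hz1, hfzbig, by rw [h8]; linarith⟩
    refine ⟨‖h‖⁻¹ • h, η / ‖h‖, ?_, by positivity, ?_, ?_⟩
    · rw [norm_smul ‖h‖⁻¹ h, norm_inv, norm_norm, inv_mul_cancel₀ hh0.ne']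
    · intro z hz
      exact ⟨(key z hz).1, (key z hz).2.1⟩
    · intro z hz
      exact (key z hz).2.2
  · -- backward direction
    intro H f hf α hα hxS ε hε
    obtain ⟨g, α₁, hg, hα₁, hsub, hfar⟩ := H (ε / 2) (by linarith) f hf α hα hxS
    have hr : max (1 - α₁) 0 < ‖g‖ := by
      rw [hg]; rcases max_cases (1 - α₁) 0 with ⟨h1, h2⟩ | ⟨h1, h2⟩ <;> rw [h1] <;> linarith
    obtain ⟨u, hu1, hu2⟩ := g.exists_lt_apply_of_lt_opNorm hr
    rw [Real.norm_eq_abs] at hu2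
    set y : X := if 0 ≤ g u then u else -u with hydef
    have hy : y ∈ ballSlice g α₁ := by
      constructor
      · rw [hydef]; split
        · exact hu1.le
        · rw [norm_neg]; exact hu1.le
      · have hgy : g y = |g u| := by
          rw [hydef]; split
          · rw [abs_of_nonneg ‹_›]
          · rw [map_neg, abs_of_neg (lt_of_not_ge ‹_›)]
        rw [hgy]
        have := le_max_left (1 - α₁) 0
        linarith
    exact ⟨y, hsub hy, by have := hfar y hy; linarith⟩
end

section
/- Let (M, e) be a pointed metric space, let x₁, …, x_m ∈ M and λ₁, …, λ_m ∈ ℝ be such that sup{ Σ_{i=1}^m λᵢ·f(xᵢ) : f : M → ℝ is 1-Lipschitz and f(e) = 0 } = 1. Let (u_n) and (v_n) be sequences in M with u_n ≠ v_n for all n and d(u_n, v_n) → 0. Then for every ε > 0 there exists N such that for all n ≥ N there is a 1-Lipschitz function f : M → ℝ with f(e) = 0 satisfying Σ_{i=1}^m λᵢ·f(xᵢ) + (f(u_n) − f(v_n))/d(u_n, v_n) > 2 − ε. (This expresses that ‖μ + m_{u_n,v_n}‖ → 2 in the Lipschitz-free space over M, where μ = Σ λᵢ δ_{xᵢ} has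 norm one.) -/
open Filter

/-- If `μ = ∑ λᵢ δ_{xᵢ}` has Lipschitz-free norm one and `d(uₙ, vₙ) → 0` with `uₙ ≠ vₙ`,
then `‖μ + m_{uₙ,vₙ}‖ → 2`. -/
theorem norm_add_molecule_tendsto_two {M : Type*} [MetricSpace M] (e : M)
    (m : ℕ) (x : Fin m → M) (lam : Fin m → ℝ)
    (hnorm : IsLUB {s : ℝ | ∃ f : M → ℝ, LipschitzWith 1 f ∧ f e = 0 ∧
      s = ∑ i, lam i * f (x i)} 1)
    (u v : ℕ → M) (huv : ∀ n, u n ≠ v n)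
    (hd : Tendsto (fun n => dist (u n) (v n)) atTop (nhds 0)) :
    ∀ ε : ℝ, 0 < ε → ∃ N : ℕ, ∀ n ≥ N, ∃ f : M → ℝ, LipschitzWith 1 f ∧ f e = 0 ∧
      (∑ i, lam i * f (x i)) + (f (u n) - f (v n)) / dist (u n) (v n) > 2 - ε := by
  intro ε hε
  set C : ℝ := ∑ i, |lam i| with hC
  have hC0 : 0 ≤ C := Finset.sum_nonneg fun i _ => abs_nonneg _
  obtain ⟨s, hs, hsgt⟩ := hnorm.exists_between (by linarith : (1:ℝ) - ε/2 < 1)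
  obtain ⟨f, hfl, hfe, hfs⟩ := hs
  have hδ : 0 < ε / (2*(2*C+1)) := by positivity
  obtain ⟨N, hN⟩ := Metric.tendsto_atTop.mp hd _ hδ
  refine ⟨N, fun n hn => ?_⟩
  set d := dist (u n) (v n) with hdd
  have hd0 : 0 < d := dist_pos.mpr (huv n)
  have hdlt : d < ε/(2*(2*C+1)) := by
    have := hN n hn
    rwa [Real.dist_eq, sub_zero, abs_of_nonneg dist_nonneg] at this
  set g : M → ℝ := fun y => max (f y) (f (v n) + d - dist y (u n)) with hg
  have haux : LipschitzWith 1 (fun y => f (v n) + d - dist y (u n)) := by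
    apply LipschitzWith.of_dist_le_mul
    intro a b
    rw [NNReal.coe_one, one_mul, Real.dist_eq]
    have h := abs_dist_sub_le a b (u n)
    rw [abs_sub_comm] at h
    calc |f (v n) + d - dist a (u n) - (f (v n) + d - dist b (u n))|
        = |dist b (u n) - dist a (u n)| := by ring_nf
      _ ≤ dist a b := h
  have hgl : LipschitzWith 1 g := by simpa using hfl.max haux
  have hgl' : LipschitzWith 1 (fun y => g y - g e) := by
    apply LipschitzWith.of_dist_le_mul
    intro a b
    rw [NNReal.coe_one, one_mul, Real.dist_eq]
    have := hgl.dist_le_mul a b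
    rw [NNReal.coe_one, one_mul, Real.dist_eq] at this
    calc |g a - g e - (g b - g e)| = |g a - g b| := by ring_nf
      _ ≤ dist a b := this
  refine ⟨fun y => g y - g e, hgl', by simp, ?_⟩
  have hgub : ∀ y, g y ≤ f y + 2*d := by
    intro y
    apply max_le (by linarith)
    have h1 : f (v n) - f y ≤ dist (v n) y := by
      have h := hfl.dist_le_mul (v n) y
      rw [NNReal.coe_one, one_mul, Real.dist_eq] at h
      calc f (v n) - f y ≤ |f (v n) - f y| := le_abs_self _
        _ ≤ dist (v n) y := h
    have h2 : dist (v n) y ≤ d + dist y (u n) := by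
      calc dist (v n) y ≤ dist (v n) (u n) + dist (u n) y := dist_triangle _ _ _
        _ = d + dist y (u n) := by rw [dist_comm (v n) (u n), dist_comm (u n) y, ← hdd]
    linarith
  have hglb : ∀ y, f y ≤ g y := fun y => le_max_left _ _
  have hge0 : 0 ≤ g e := hfe ▸ hglb e
  have hge2 : g e ≤ 2*d := by have := hgub e; rwa [hfe, zero_add] at this
  -- molecule part
  have hgu : f (v n) + d ≤ g (u n) := by
    have : f (v n) + d - dist (u n) (u n) ≤ g (u n) := le_max_right _ _
    simpa using this
  have hgv : g (v n) = f (v n) := by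
    have : dist (v n) (u n) = d := dist_comm (v n) (u n)
    simp [hg, this]
  have hmol : 1 ≤ ((g (u n) - g e) - (g (v n) - g e)) / d := by
    rw [le_div_iff₀ hd0, one_mul]
    rw [hgv]; linarith
  -- sum part
  have hsum : s - 2*d*C ≤ ∑ i, lam i * (g (x i) - g e) := by
    have key : ∀ i ∈ Finset.univ, lam i * f (x i) - 2*d*|lam i| ≤ lam i * (g (x i) - g e) := by
      intro i _
      have h1 : f (x i) ≤ g (x i) := hglb (x i)
      have h2 : g (x i) ≤ f (x i) + 2*d := hgub (x i)
      have h3 : lam i ≤ |lam i| := le_abs_self _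
      have h4 : -|lam i| ≤ lam i := neg_abs_le _
      nlinarith [mul_nonneg (sub_nonneg.mpr h3) (sub_nonneg.mpr hge0),
        mul_nonneg (sub_nonneg.mpr h3) (by linarith : (0:ℝ) ≤ f (x i) + 2*d - g (x i) + g e),
        mul_nonneg (by linarith : (0:ℝ) ≤ |lam i| + lam i)
          (by linarith : (0:ℝ) ≤ (g (x i) - g e) - f (x i) + 2*d),
        mul_nonneg (by linarith : (0:ℝ) ≤ |lam i| - lam i)
          (by linarith : (0:ℝ) ≤ 2*d - ((g (x i) - g e) - f (x i)))]
    calc s - 2*d*C = ∑ i, (lam i * f (x i) - 2*d*|lam i|) := by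
          rw [Finset.sum_sub_distrib, ← Finset.mul_sum, ← hC, ← hfs]
      _ ≤ ∑ i, lam i * (g (x i) - g e) := Finset.sum_le_sum key
  have hdC : 2*d*C < ε/2 := by
    have h := (lt_div_iff₀ (by positivity : (0:ℝ) < 2*(2*C+1))).mp hdlt
    nlinarith [mul_nonneg hd0.le hC0]
  have : (1:ℝ) - ε/2 < s := hsgt.1
  calc 2 - ε < (s - 2*d*C) + 1 := by linarith
    _ ≤ (∑ i, lam i * (g (x i) - g e)) +
        ((g (u n) - g e) - (g (v n) - g e)) / d := add_le_add hsum hmol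
end

section
/- Let M be a compact metric space and let x ≠ y ∈ M. The following are equivalent: (1) for every function f : M → ℝ with Lipschitz constant exactly 1, every α ∈ (0, 1) and every ε > 0, there exist u ≠ v ∈ M with f(u) − f(v) > (1 − α)·d(u, v) and ‖m_{x,y} − m_{u,v}‖ > 2 − ε; (2) for all u ≠ v ∈ M such that every z ∈ M with d(u, z) + d(z, v) = d(u, v) satisfies z ∈ {u, v}, one has d(x, y) + d(u, v) ≤ min{d(x, u) + d(y, v), d(x, v) + d(y, u)}. (Condition (1) says exactly that the molecule m_{x,y} is a Daugavet point of the unit ball of the Lipschitz-free space over M.) -/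
open NNReal


/-- Cost of a chain starting at `p`, passing through the points of `l`, ending at `v`,
with edge weight `w`. -/
def chainCost {M : Type*} (w : M → M → ℝ) (v : M) : M → List M → ℝ
  | p, [] => w p v
  | p, z :: l => w p z + chainCost w v z l

@[simp] lemma chainCost_nil {M : Type*} (w : M → M → ℝ) (v p : M) :
    chainCost w v p [] = w p v := rfl

@[simp] lemma chainCost_cons {M : Type*} (w : M → M → ℝ) (v p z : M) (l : List M) :
    chainCost w v p (z :: l) = w p z + chainCost w v z l := rfl

lemma chainCost_nonneg {M : Type*} (w : M → M → ℝ) (v : M)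
    (hw : ∀ p q, 0 ≤ w p q) (p : M) (l : List M) : 0 ≤ chainCost w v p l := by
  induction l generalizing p with
  | nil => exact hw p v
  | cons z l ih => exact add_nonneg (hw p z) (ih z)

lemma half_chainLen_le_chainCost {M : Type*} [MetricSpace M] (w : M → M → ℝ) (v : M)
    (hw : ∀ p q, dist p q / 2 ≤ w p q) (p : M) (l : List M) :
    chainCost dist v p l / 2 ≤ chainCost w v p l := by
  induction l generalizing p with
  | nil => exact hw p v
  | cons z l ih =>
    have h1 := hw p z
    have h2 := ih z
    simp only [chainCost_cons]
    linarith

lemma dist_le_chainLen {M : Type*} [MetricSpace M] (v p : M) (l : List M) :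
    dist p v ≤ chainCost dist v p l := by
  induction l generalizing p with
  | nil => simp
  | cons z l ih =>
    have h1 := dist_triangle p z v
    have h2 := ih z
    simp only [chainCost_cons]
    linarith


/-- Upper bound on the "molecule difference" functional evaluated on a 1-Lipschitz function. -/
lemma molecule_upper {M : Type*} [MetricSpace M] (x y p q : M) (h : M → ℝ)
    (hl : LipschitzWith 1 h) (hxy : x ≠ y) (hpq : p ≠ q) :
    (h x - h y) / dist x y - (h p - h q) / dist p q ≤
      2 - (dist x y + dist p q - dist x p - dist y q) / max (dist x y) (dist p q) := by
  have ha : (0:ℝ) < dist x y := dist_pos.mpr hxy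
  have hb : (0:ℝ) < dist p q := dist_pos.mpr hpq
  have hm : (0:ℝ) < max (dist x y) (dist p q) := lt_of_lt_of_le ha (le_max_left _ _)
  have hma : dist x y ≤ max (dist x y) (dist p q) := le_max_left _ _
  have hmb : dist p q ≤ max (dist x y) (dist p q) := le_max_right _ _
  have lip : ∀ a b : M, h a - h b ≤ dist a b := by
    intro a b
    have := hl.dist_le_mul a b
    rw [Real.dist_eq, NNReal.coe_one, one_mul] at this
    exact le_trans (le_abs_self _) this
  set s := (h x - h y) / dist x y with hs_def
  set t := (h q - h p) / dist p q with ht_def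
  have hsa : s * dist x y = h x - h y := div_mul_cancel₀ _ ha.ne'
  have htb : t * dist p q = h q - h p := div_mul_cancel₀ _ hb.ne'
  have hs1 : s ≤ 1 := by
    rw [hs_def, div_le_one ha]; exact lip x y
  have ht1 : t ≤ 1 := by
    rw [ht_def, div_le_one hb, dist_comm p q]; exact lip q p
  have hkey : s * dist x y + t * dist p q ≤ dist x p + dist y q := by
    rw [hsa, htb]
    have h1 := lip x p
    have h2 := lip q y
    have h3 : dist y q = dist q y := dist_comm _ _
    linarith
  have hgoal : (h x - h y) / dist x y - (h p - h q) / dist p q = s + t := by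
    rw [hs_def, ht_def]; ring
  rw [hgoal]
  set m := max (dist x y) (dist p q) with hm_def
  have hdiv : (dist x y + dist p q - dist x p - dist y q) / m ≤ (1 - s) + (1 - t) := by
    rw [div_le_iff₀ hm]
    have e1 : dist x y * (1 - s) ≤ m * (1 - s) :=
      mul_le_mul_of_nonneg_right hma (by linarith)
    have e2 : dist p q * (1 - t) ≤ m * (1 - t) :=
      mul_le_mul_of_nonneg_right hmb (by linarith)
    nlinarith
  linarith


lemma lipschitzWith_one_dist_add {M : Type*} [MetricSpace M] (a : M) (c : ℝ) :
    LipschitzWith 1 (fun t => dist t a + c) := by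
  apply LipschitzWith.of_dist_le_mul
  intro p q
  rw [Real.dist_eq, NNReal.coe_one, one_mul]
  have : dist p a + c - (dist q a + c) = dist p a - dist q a := by ring
  rw [this]
  exact abs_dist_sub_le p q a

/-- Lower bound witness: an explicit 1-Lipschitz function nearly norming `m_{x,y} - m_{u,v}`. -/
lemma molecule_witness {M : Type*} [MetricSpace M] (x y u v : M) (hxy : x ≠ y) (huv : u ≠ v) :
    ∃ h : M → ℝ, LipschitzWith 1 h ∧
      2 - max 0 (dist x y + dist u v - dist x u - dist y v) / dist x y ≤
        (h x - h y) / dist x y - (h u - h v) / dist u v := by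
  have hdxy : (0:ℝ) < dist x y := dist_pos.mpr hxy
  have hduv : (0:ℝ) < dist u v := dist_pos.mpr huv
  have dnn : ∀ a b : M, (0:ℝ) ≤ dist a b := fun a b => dist_nonneg
  -- commutation facts
  have cxy : dist y x = dist x y := dist_comm y x
  have cxu : dist u x = dist x u := dist_comm u x
  have cxv : dist v x = dist x v := dist_comm v x
  have cyu : dist u y = dist y u := dist_comm u y
  have cyv : dist v y = dist y v := dist_comm v y
  have cuv : dist v u = dist u v := dist_comm v u
  -- triangle facts
  have t1 : dist x y ≤ dist x u + dist y u := by
    have := dist_triangle x u y; linarith [dist_comm u y ▸ this]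
  have t2 : dist u v ≤ dist y u + dist y v := by
    have h1 := dist_triangle u y v; rw [cyu] at h1; linarith
  have t3 : dist u v ≤ dist x u + dist x v := by
    have h1 := dist_triangle u x v; rw [cxu] at h1; linarith
  have t4 : dist x y ≤ dist x v + dist y v := by
    have h1 := dist_triangle x v y; rw [cyv] at h1; linarith
  have t5 : dist x y ≤ dist x u + dist u v + dist y v := by
    have h1 := dist_triangle x u y
    have h2 := dist_triangle u v y
    rw [cyv] at h2
    linarith
  have t6 : dist x y ≤ dist x v + dist u v + dist y u := by
    have h1 := dist_triangle x v y
    have h2 := dist_triangle v u y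
    rw [cuv] at h2
    rw [cyu] at h2
    linarith
  have t8 : dist x u ≤ dist x v + dist u v := by
    have h1 := dist_triangle x v u
    rw [cuv] at h1; linarith
  have t7 : dist u v ≤ dist x u + dist x y + dist y v := by
    have h1 := dist_triangle u x v
    have h2 := dist_triangle x y v
    rw [cxu] at h1
    rw [show dist y v = dist y v from rfl] at h2
    linarith
  have t9 : dist y u ≤ dist x y + dist x u := by
    have h1 := dist_triangle y x u
    rw [cxy] at h1; linarith
  have t10 : dist y v ≤ dist x y + dist x v := by
    have h1 := dist_triangle y x v
    rw [cxy] at h1; linarith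
  set cy := max (-(dist y u)) (dist u v - dist y v) with hcy_def
  set cx := min (cy + dist x y) (min (dist x u) (dist u v + dist x v)) with hcx_def
  -- bounds on cy
  have hcy_le_dyu : cy ≤ dist y u := max_le (by linarith [dnn y u]) (by linarith)
  have hcy_le6 : cy ≤ dist u v + dist y v := max_le (by linarith [dnn y u, dnn u v, dnn y v]) (by linarith [dnn y v])
  have hcy_ge : -(dist y u) ≤ cy := le_max_left _ _
  have hcy_ge2 : dist u v - dist y v ≤ cy := le_max_right _ _
  -- bounds on cx
  have hcx_le1 : cx ≤ cy + dist x y := min_le_left _ _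
  have hcx_le2 : cx ≤ dist x u := le_trans (min_le_right _ _) (min_le_left _ _)
  have hcx_le3 : cx ≤ dist u v + dist x v := le_trans (min_le_right _ _) (min_le_right _ _)
  have hcx_ge_neg : -(dist x u) ≤ cx := by
    apply le_min
    · linarith [hcy_ge, t9]
    exact le_min (by linarith [dnn x u]) (by linarith [dnn x u, dnn u v, dnn x v])
  have hcx_ge_v : dist u v - dist x v ≤ cx := by
    apply le_min
    · linarith [hcy_ge2, t10]
    exact le_min (by linarith [t3]) (by linarith [dnn x v])
  have hcy_le_cx : cy ≤ cx + dist x y := by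
    have hA : cy ≤ dist x u + dist x y := max_le (by linarith [dnn y u, dnn x u, dnn x y]) (by linarith [t7])
    have hB : cy ≤ dist u v + dist x v + dist x y :=
      max_le (by linarith [dnn y u, dnn u v, dnn x v, dnn x y]) (by linarith [dnn x v, dnn y v, dnn x y])
    have : cy - dist x y ≤ cx := le_min (by linarith [hdxy]) (le_min (by linarith) (by linarith))
    linarith
  set h : M → ℝ := fun t =>
    min (min (dist t x + cx) (dist t y + cy)) (min (dist t u) (dist t v + dist u v)) with hh_def
  have hlip : LipschitzWith 1 h := by
    have l1 := lipschitzWith_one_dist_add x cx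
    have l2 := lipschitzWith_one_dist_add y cy
    have l3 : LipschitzWith 1 fun t : M => dist t u := LipschitzWith.dist_left u
    have l4 := lipschitzWith_one_dist_add v (dist u v)
    have := (l1.min l2).min (l3.min l4)
    simpa using this
  -- values at the anchors
  have hx_val : h x = cx := by
    apply le_antisymm
    · calc h x ≤ dist x x + cx := le_trans (min_le_left _ _) (min_le_left _ _)
        _ = cx := by simp
    · refine le_min (le_min ?_ ?_) (le_min ?_ ?_)
      · simp
      · linarith [hcx_le1]
      · linarith [hcx_le2]
      · linarith [hcx_le3]
  have hy_val : h y = cy := by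
    apply le_antisymm
    · calc h y ≤ dist y y + cy := le_trans (min_le_left _ _) (min_le_right _ _)
        _ = cy := by simp
    · refine le_min (le_min ?_ ?_) (le_min ?_ ?_)
      · rw [cxy]; linarith [hcy_le_cx]
      · simp
      · linarith [hcy_le_dyu]
      · linarith [hcy_le6]
  have hu_val : h u = 0 := by
    apply le_antisymm
    · calc h u ≤ dist u u := le_trans (min_le_right _ _) (min_le_left _ _)
        _ = 0 := by simp
    · refine le_min (le_min ?_ ?_) (le_min ?_ ?_)
      · rw [cxu]; linarith [hcx_ge_neg]
      · rw [cyu]; linarith [hcy_ge]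
      · exact dnn u u
      · linarith [dnn u v]
  have hv_val : h v = dist u v := by
    apply le_antisymm
    · calc h v ≤ dist v v + dist u v := le_trans (min_le_right _ _) (min_le_right _ _)
        _ = dist u v := by simp
    · refine le_min (le_min ?_ ?_) (le_min ?_ ?_)
      · rw [cxv]; linarith [hcx_ge_v]
      · rw [cyv]; linarith [hcy_ge2]
      · rw [cuv]
      · linarith [dnn v v]
  -- the key lower bound on cx - cy
  have hkey : dist x y - max 0 (dist x y + dist u v - dist x u - dist y v) ≤ cx - cy := by
    rcases le_or_gt (dist x y + dist u v - dist x u - dist y v) 0 with hE | hE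
    · rw [max_eq_left hE]
      have h2 : cy ≤ dist x u - dist x y := max_le (by linarith [t1]) (by linarith)
      have h3 : cy ≤ dist u v + dist x v - dist x y := max_le (by linarith [t6]) (by linarith [t4])
      have : cy + dist x y ≤ cx := le_min (by linarith) (le_min (by linarith) (by linarith))
      linarith
    · rw [max_eq_right hE.le]
      have h1 : cy ≤ dist u v - dist y v := max_le (by linarith [t2]) (by linarith)
      have : cy + (dist x u + dist y v - dist u v) ≤ cx := by
        refine le_min (by linarith) (le_min (by linarith) (by linarith [t8]))
      linarith
  refine ⟨h, hlip, ?_⟩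
  rw [hx_val, hy_val, hu_val, hv_val]
  have e1 : (0 - dist u v) / dist u v = -1 := by
    rw [zero_sub, neg_div, div_self hduv.ne']
  rw [e1]
  have e2 : (dist x y - max 0 (dist x y + dist u v - dist x u - dist y v)) / dist x y ≤
      (cx - cy) / dist x y := (div_le_div_iff_of_pos_right hdxy).mpr hkey
  have e3 : (dist x y - max 0 (dist x y + dist u v - dist x u - dist y v)) / dist x y
      = 1 - max 0 (dist x y + dist u v - dist x u - dist y v) / dist x y := by
    rw [_root_.sub_div, div_self hdxy.ne']
  linarith [e2, e3.symm.le, e3.le]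

set_option maxHeartbeats 1000000 in
/-- If the pure-metric condition fails at an "extreme" pair `(u,v)` (in the orientation
`d(x,u) + d(y,v) < d(x,y) + d(u,v)`), then the Daugavet-type property (1) fails. -/
lemma defeat {M : Type*} [MetricSpace M] [CompactSpace M] (x y u v : M)
    (hxy : x ≠ y) (huv : u ≠ v)
    (hext : ∀ z : M, dist u z + dist z v = dist u v → z = u ∨ z = v)
    (hEuv : dist x u + dist y v < dist x y + dist u v)
    (H1 : ∀ f : M → ℝ, LipschitzWith 1 f → (∀ K : ℝ≥0, LipschitzWith K f → 1 ≤ K) →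
      ∀ α : ℝ, 0 < α → α < 1 → ∀ ε : ℝ, 0 < ε →
        ∃ p q : M, p ≠ q ∧ f p - f q > (1 - α) * dist p q ∧
          ∃ h : M → ℝ, LipschitzWith 1 h ∧
            (h x - h y) / dist x y - (h p - h q) / dist p q > 2 - ε) : False := by
  have hdxy : (0:ℝ) < dist x y := dist_pos.mpr hxy
  have hduv : (0:ℝ) < dist u v := dist_pos.mpr huv
  set Δ := Metric.diam (Set.univ : Set M) with hΔdef
  have hdiam : ∀ p q : M, dist p q ≤ Δ := fun p q =>
    Metric.dist_le_diam_of_mem isCompact_univ.isBounded trivial trivial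
  have hΔ : (0:ℝ) < Δ := lt_of_lt_of_le hdxy (hdiam x y)
  clear_value Δ
  set c := (dist x y + dist u v - dist x u - dist y v) / 8 with hc_def
  have hc : (0:ℝ) < c := by rw [hc_def]; linarith
  have h8c : 8 * c = dist x y + dist u v - dist x u - dist y v := by rw [hc_def]; ring
  clear_value c
  set r := min (c / 4) (dist u v / 8) with hr_def
  have hr0 : (0:ℝ) < r := lt_min (by linarith) (by linarith)
  have hrc : r ≤ c / 4 := min_le_left _ _
  have hrduv : r ≤ dist u v / 8 := min_le_right _ _
  clear_value r
  -- cluster property from extremality and compactness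
  obtain ⟨ξ, hξ0, hξduv, hξ⟩ : ∃ ξ : ℝ, 0 < ξ ∧ ξ ≤ dist u v / 8 ∧
      ∀ z : M, dist u z + dist z v ≤ dist u v + ξ → dist z u < r ∨ dist z v < r := by
    by_cases hT : {z : M | r ≤ dist z u ∧ r ≤ dist z v}.Nonempty
    · have hTcl : IsClosed {z : M | r ≤ dist z u ∧ r ≤ dist z v} := by
        apply IsClosed.inter
        · exact isClosed_le continuous_const (Continuous.dist continuous_id continuous_const)
        · exact isClosed_le continuous_const (Continuous.dist continuous_id continuous_const)
      obtain ⟨z₀, hz₀T, hz₀min⟩ := hTcl.isCompact.exists_isMinOn hT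
        ((Continuous.add (Continuous.dist continuous_const continuous_id)
          (Continuous.dist continuous_id continuous_const)).continuousOn :
          ContinuousOn (fun z : M => dist u z + dist z v) _)
      set θ := dist u z₀ + dist z₀ v - dist u v with hθdef
      have hθnn : 0 ≤ θ := by have := dist_triangle u z₀ v; rw [hθdef]; linarith
      have hθpos : 0 < θ := by
        rcases lt_or_eq_of_le hθnn with h | h
        · exact h
        · exfalso
          have heq : dist u z₀ + dist z₀ v = dist u v := by rw [hθdef] at h; linarith
          rcases hext z₀ heq with rfl | rfl
          · have := hz₀T.1; rw [dist_self] at this; linarith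
          · have := hz₀T.2; rw [dist_self] at this; linarith
      refine ⟨min (θ / 2) (dist u v / 8), lt_min (by linarith) (by linarith),
        min_le_right _ _, ?_⟩
      intro z hz
      by_contra hcon
      push_neg at hcon
      have hzT : z ∈ {z : M | r ≤ dist z u ∧ r ≤ dist z v} := ⟨hcon.1, hcon.2⟩
      have := hz₀min hzT
      simp only [Set.mem_setOf_eq] at this
      have hm : min (θ / 2) (dist u v / 8) ≤ θ / 2 := min_le_left _ _
      have hzub : dist u z + dist z v ≤ dist u v + θ / 2 := le_trans hz (by linarith)
      simp only [id_eq, Pi.add_apply] at this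
      linarith [this, hzub, hθpos, hθdef.le, hθdef.ge]
    · refine ⟨dist u v / 8, by linarith, le_refl _, ?_⟩
      intro z _
      by_contra hcon
      push_neg at hcon
      exact hT ⟨z, hcon.1, hcon.2⟩
  -- weights and chain functional
  set E1 : M → M → ℝ := fun p q => dist x y + dist p q - dist x p - dist y q with hE1def
  set γ := Δ / c with hγdef
  have hγ : 0 < γ := div_pos hΔ hc
  set w : M → M → ℝ :=
    fun p q => dist p q / 2 + min (dist p q / 2) (γ * max 0 (E1 p q - c)) with hwdef
  have hw_ge : ∀ p q : M, dist p q / 2 ≤ w p q := by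
    intro p q
    have h0 : (0:ℝ) ≤ min (dist p q / 2) (γ * max 0 (E1 p q - c)) :=
      le_min (by positivity) (by positivity)
    simp only [hwdef]
    linarith
  have hw_le : ∀ p q : M, w p q ≤ dist p q := by
    intro p q
    have := min_le_left (dist p q / 2) (γ * max 0 (E1 p q - c))
    simp only [hwdef]
    linarith
  have hw_nonneg : ∀ p q : M, 0 ≤ w p q := fun p q =>
    le_trans (by positivity) (hw_ge p q)
  have hw_full : ∀ p q : M, 6 * c ≤ E1 p q - c → w p q = dist p q := by
    intro p q h6
    have h2 : γ * (6 * c) ≤ γ * max 0 (E1 p q - c) :=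
      mul_le_mul_of_nonneg_left (le_trans h6 (le_max_right _ _)) hγ.le
    have h3 : γ * (6 * c) = 6 * Δ := by rw [hγdef]; field_simp
    have h4 : dist p q / 2 ≤ γ * max 0 (E1 p q - c) := by
      have := hdiam p q; linarith
    simp only [hwdef]
    rw [min_eq_left h4]
    ring
  set f : M → ℝ := fun p => sInf (Set.range (chainCost w v p)) with hfdef
  have hfRne : ∀ p : M, (Set.range (chainCost w v p)).Nonempty := fun p => ⟨w p v, ⟨[], rfl⟩⟩
  have hfBdd : ∀ p : M, BddBelow (Set.range (chainCost w v p)) := by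
    intro p
    exact ⟨0, by rintro b ⟨l, rfl⟩; exact chainCost_nonneg w v hw_nonneg p l⟩
  have hf_le : ∀ (p : M) (l : List M), f p ≤ chainCost w v p l := fun p l =>
    csInf_le (hfBdd p) ⟨l, rfl⟩
  have hf_nonneg : ∀ p : M, 0 ≤ f p := fun p =>
    le_csInf (hfRne p) (by rintro b ⟨l, rfl⟩; exact chainCost_nonneg w v hw_nonneg p l)
  have hwvv : w v v = 0 := by
    have h1 : (0:ℝ) ≤ γ * max 0 (E1 v v - c) := by positivity
    simp only [hwdef]
    rw [dist_self]
    rw [show (0:ℝ)/2 = 0 by norm_num, min_eq_left h1]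
    ring
  have hfv : f v = 0 := le_antisymm (by simpa [hwvv] using hf_le v []) (hf_nonneg v)
  have hf_step : ∀ p q : M, f p ≤ w p q + f q := by
    intro p q
    have h1 : ∀ b ∈ Set.range (chainCost w v q), f p - w p q ≤ b := by
      rintro b ⟨l, rfl⟩
      have := hf_le p (q :: l)
      simp only [chainCost_cons] at this
      linarith
    have := le_csInf (hfRne q) h1
    linarith
  have hf_lip : ∀ p q : M, f p - f q ≤ dist p q := by
    intro p q
    have := hf_step p q
    have := hw_le p q
    linarith
  -- the key chain estimate
  have hclaim : ∀ (l : List M) (p : M),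
      dist u p + chainCost dist v p l ≤ dist u v + ξ → dist p u < r →
      chainCost dist v p l / 2 + (dist u v - 2 * r) / 2 ≤ chainCost w v p l := by
    intro l
    induction l with
    | nil =>
      intro p hlen hpu
      simp only [chainCost_nil] at hlen ⊢
      have hup : dist u p = dist p u := dist_comm u p
      have htri : dist u v ≤ dist u p + dist p v := dist_triangle u p v
      have hpv : dist u v - r ≤ dist p v := by linarith
      have hxp : dist x p ≤ dist x u + r := by
        have := dist_triangle x u p
        linarith
      have hE : 6 * c ≤ E1 p v - c := by
        simp only [hE1def]
        linarith [hrc]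
      rw [hw_full p v hE]
      linarith
    | cons z l ih =>
      intro p hlen hpu
      simp only [chainCost_cons] at hlen ⊢
      have hup : dist u p = dist p u := dist_comm u p
      by_cases hzu : dist z u < r
      · have hIH : chainCost dist v z l / 2 + (dist u v - 2 * r) / 2 ≤ chainCost w v z l := by
          apply ih z ?_ hzu
          have := dist_triangle u p z
          linarith
        have := hw_ge p z
        linarith
      · push_neg at hzu
        have hσ : dist u z + dist z v ≤ dist u v + ξ := by
          have h1 := dist_triangle u p z
          have h2 := dist_le_chainLen v z l
          linarith
        have hzv : dist z v < r := by
          rcases hξ z hσ with hcase | hcase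
          · exact absurd hcase (not_lt.mpr hzu)
          · exact hcase
        have hpz : dist u v - 2 * r ≤ dist p z := by
          have h1 := dist_triangle u p v
          have h2 := dist_triangle p z v
          linarith
        have hE : 6 * c ≤ E1 p z - c := by
          have hxp : dist x p ≤ dist x u + r := by
            have := dist_triangle x u p
            linarith
          have hyz : dist y z ≤ dist y v + r := by
            have h1 := dist_triangle y v z
            have h2 : dist v z = dist z v := dist_comm v z
            linarith
          simp only [hE1def]
          linarith [hrc]
        rw [hw_full p z hE]
        have hG := half_chainLen_le_chainCost w v hw_ge z l
        linarith
  -- lower bound on f u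
  set δ₀ := min (ξ / 2) ((dist u v - 2 * r) / 2) with hδ₀def
  have hδ₀ : 0 < δ₀ := by
    apply lt_min (by linarith)
    have : 2 * r ≤ dist u v / 4 := by linarith [hrduv]
    linarith
  have hfu : dist u v / 2 + δ₀ ≤ f u := by
    apply le_csInf (hfRne u)
    rintro b ⟨l, rfl⟩
    rcases le_or_gt (dist u u + chainCost dist v u l) (dist u v + ξ) with hle | hlt
    · have h1 := hclaim l u hle (by rw [dist_self]; exact hr0)
      have h2 := dist_le_chainLen v u l
      have h3 : δ₀ ≤ (dist u v - 2 * r) / 2 := min_le_right _ _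
      linarith
    · rw [dist_self, zero_add] at hlt
      have h1 := half_chainLen_le_chainCost w v hw_ge u l
      have h3 : δ₀ ≤ ξ / 2 := min_le_left _ _
      linarith
  clear_value f δ₀
  -- the supremum of slopes
  set S := {s : ℝ | ∃ p q : M, p ≠ q ∧ s = (f p - f q) / dist p q} with hSdef
  have hSne : S.Nonempty := ⟨(f x - f y) / dist x y, x, y, hxy, rfl⟩
  have hSbdd : BddAbove S := by
    refine ⟨1, ?_⟩
    rintro s ⟨p, q, hpq, rfl⟩
    rw [div_le_one (dist_pos.mpr hpq)]
    exact hf_lip p q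
  set L := sSup S with hLdef
  have hLge : 1 / 2 + δ₀ / dist u v ≤ L := by
    have h1 : (f u - f v) / dist u v ≤ L := le_csSup hSbdd ⟨u, v, huv, rfl⟩
    have h3 : (dist u v / 2 + δ₀) / dist u v ≤ f u / dist u v :=
      (div_le_div_iff_of_pos_right hduv).mpr hfu
    have h4 : (dist u v / 2 + δ₀) / dist u v = 1 / 2 + δ₀ / dist u v := by
      field_simp
    rw [hfv, sub_zero] at h1
    linarith
  have hL1 : L ≤ 1 := by
    apply csSup_le hSne
    rintro s ⟨p, q, hpq, rfl⟩
    rw [div_le_one (dist_pos.mpr hpq)]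
    exact hf_lip p q
  have hLhalf : 1 / 2 < L := by
    have : 0 < δ₀ / dist u v := div_pos hδ₀ hduv
    linarith
  have hL0 : 0 < L := by linarith
  have hslope : ∀ p q : M, f p - f q ≤ L * dist p q := by
    intro p q
    rcases eq_or_ne p q with rfl | hpq
    · simp
    · have h1 : (f p - f q) / dist p q ≤ L := le_csSup hSbdd ⟨p, q, hpq, rfl⟩
      have h2 : (0:ℝ) < dist p q := dist_pos.mpr hpq
      calc f p - f q = (f p - f q) / dist p q * dist p q := by field_simp
        _ ≤ L * dist p q := mul_le_mul_of_nonneg_right h1 dist_nonneg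
  have hLlub : ∀ b : ℝ, (∀ p q : M, p ≠ q → (f p - f q) / dist p q ≤ b) → L ≤ b := by
    intro b hb
    apply csSup_le hSne
    rintro s ⟨p, q, hpq, rfl⟩
    exact hb p q hpq
  clear_value L
  set g : M → ℝ := fun p => f p / L with hgdef
  have hgsub : ∀ p q : M, f p - f q = L * (g p - g q) := by
    intro p q
    simp only [hgdef]
    rw [mul_sub, mul_div_cancel₀ _ hL0.ne', mul_div_cancel₀ _ hL0.ne']
  have hg_lip : LipschitzWith 1 g := by
    apply LipschitzWith.of_dist_le_mul
    intro p q
    rw [Real.dist_eq, NNReal.coe_one, one_mul]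
    have h1 := hslope p q
    have h2 := hslope q p
    rw [dist_comm q p] at h2
    have habs : |f p - f q| ≤ L * dist p q := abs_le.mpr ⟨by linarith, h1⟩
    simp only [hgdef]
    rw [div_sub_div_same, abs_div, abs_of_pos hL0, div_le_iff₀ hL0]
    linarith
  have hg_min : ∀ K : ℝ≥0, LipschitzWith K g → 1 ≤ K := by
    intro K hK
    have h1 : ∀ p q : M, f p - f q ≤ (K : ℝ) * L * dist p q := by
      intro p q
      have hd := hK.dist_le_mul p q
      rw [Real.dist_eq] at hd
      have h2 : g p - g q ≤ (K : ℝ) * dist p q := le_trans (le_abs_self _) hd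
      rw [hgsub p q]
      calc L * (g p - g q) ≤ L * ((K : ℝ) * dist p q) :=
            mul_le_mul_of_nonneg_left h2 hL0.le
        _ = (K : ℝ) * L * dist p q := by ring
    have h4 : L ≤ (K : ℝ) * L := by
      apply hLlub
      intro p q hpq
      rw [div_le_iff₀ (dist_pos.mpr hpq)]
      linarith [h1 p q]
    have h5 : (1 : ℝ) ≤ (K : ℝ) := by nlinarith
    exact_mod_cast h5
  -- apply the Daugavet hypothesis to g
  have hα0 : 0 < 1 - 1 / (2 * L) := by
    have h1 : 1 / (2 * L) < 1 := by
      rw [div_lt_one (by linarith)]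
      linarith
    linarith
  have hα1 : 1 - 1 / (2 * L) < 1 := by
    have : 0 < 1 / (2 * L) := by positivity
    linarith
  have hε : 0 < c / Δ := div_pos hc hΔ
  obtain ⟨p, q, hpq, hsl, h, hhl, hexpr⟩ :=
    H1 g hg_lip hg_min (1 - 1 / (2 * L)) hα0 hα1 (c / Δ) hε
  have hfs : dist p q / 2 < f p - f q := by
    have h2 : (1 - (1 - 1 / (2 * L))) = 1 / (2 * L) := by ring
    rw [h2] at hsl
    have h3 := hgsub p q
    have h4 : L * (1 / (2 * L) * dist p q) < L * (g p - g q) :=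
      mul_lt_mul_of_pos_left hsl hL0
    have h5 : L * (1 / (2 * L) * dist p q) = dist p q / 2 := by
      field_simp
    rw [h3]
    linarith
  have hE1pq : c < E1 p q := by
    have h1 : f p - f q ≤ w p q := by
      have := hf_step p q
      linarith [hf_nonneg q]
    have h2 : dist p q / 2 < w p q := lt_of_lt_of_le hfs h1
    have h3 : 0 < min (dist p q / 2) (γ * max 0 (E1 p q - c)) := by
      simp only [hwdef] at h2
      linarith
    have h4 : 0 < γ * max 0 (E1 p q - c) := lt_of_lt_of_le h3 (min_le_right _ _)
    rcases le_or_gt (E1 p q - c) 0 with hle | hlt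
    · exfalso
      rw [max_eq_left hle, mul_zero] at h4
      exact lt_irrefl 0 h4
    · linarith
  have hub := molecule_upper x y p q h hhl hxy hpq
  have hmxΔ : max (dist x y) (dist p q) ≤ Δ := max_le (hdiam x y) (hdiam p q)
  have hmx0 : 0 < max (dist x y) (dist p q) := lt_of_lt_of_le hdxy (le_max_left _ _)
  have hE1pos : 0 < E1 p q := lt_trans hc hE1pq
  have hstep : c / Δ < (dist x y + dist p q - dist x p - dist y q) / max (dist x y) (dist p q) := by
    have hE1' : E1 p q = dist x y + dist p q - dist x p - dist y q := by simp only [hE1def]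
    have h1 : c / Δ < E1 p q / Δ := (div_lt_div_iff_of_pos_right hΔ).mpr hE1pq
    have h2 : E1 p q / Δ ≤ E1 p q / max (dist x y) (dist p q) :=
      (div_le_div_iff_of_pos_left hE1pos hΔ hmx0).mpr hmxΔ
    rw [hE1'] at h1 h2
    linarith
  linarith [hexpr, hub, hstep]

/-- For a compact metric space `M` and distinct `x, y ∈ M`, the molecule `m_{x,y}` is a
Daugavet point iff a purely metric separation condition from "extreme" pairs holds. -/
theorem molecule_daugavet_point_iff {M : Type*} [MetricSpace M] [CompactSpace M]
    (x y : M) (hxy : x ≠ y) :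
    (∀ f : M → ℝ, LipschitzWith 1 f → (∀ K : ℝ≥0, LipschitzWith K f → 1 ≤ K) →
      ∀ α : ℝ, 0 < α → α < 1 → ∀ ε : ℝ, 0 < ε →
        ∃ u v : M, u ≠ v ∧ f u - f v > (1 - α) * dist u v ∧
          ∃ h : M → ℝ, LipschitzWith 1 h ∧
            (h x - h y) / dist x y - (h u - h v) / dist u v > 2 - ε)
    ↔
    (∀ u v : M, u ≠ v → (∀ z : M, dist u z + dist z v = dist u v → z = u ∨ z = v) →
      dist x y + dist u v ≤ min (dist x u + dist y v) (dist x v + dist y u)) := by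
  have hdxy : (0:ℝ) < dist x y := dist_pos.mpr hxy
  constructor
  · -- (1) → (2)
    intro H1 u v huv hext
    by_contra hcon
    rw [not_le, min_lt_iff] at hcon
    rcases hcon with hlt | hlt
    · exact defeat x y u v hxy huv hext hlt H1
    · have hext' : ∀ z : M, dist v z + dist z u = dist v u → z = v ∨ z = u := by
        intro z hz
        rw [dist_comm v z, dist_comm z u, dist_comm v u] at hz
        have : dist u z + dist z v = dist u v := by linarith
        rcases hext z this with h | h
        · exact Or.inr h
        · exact Or.inl h
      have hlt' : dist x v + dist y u < dist x y + dist v u := by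
        rw [dist_comm v u] at *
        linarith [hlt]
      exact defeat x y v u hxy huv.symm hext' hlt' H1
  · -- (2) → (1)
    intro H2 f hf hfmin α hα0 hα1 ε hε0
    set δ := ε * dist x y / 4 with hδdef
    have hδ0 : 0 < δ := by positivity
    by_cases hA : ∃ p q : M, p ≠ q ∧ dist p q ≤ δ ∧ f p - f q > (1 - α) * dist p q
    · -- small high-slope pair
      obtain ⟨p, q, hpq, hsmall, hslope⟩ := hA
      obtain ⟨h, hhl, hbound⟩ := molecule_witness x y p q hxy hpq
      refine ⟨p, q, hpq, hslope, h, hhl, ?_⟩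
      have hEle : dist x y + dist p q - dist x p - dist y q ≤ 2 * dist p q := by
        have h1 := dist_triangle x p y
        have h2 := dist_triangle p q y
        have h3 : dist p y = dist y p := dist_comm p y
        have h4 : dist q y = dist y q := dist_comm q y
        linarith
      have hEmax : max 0 (dist x y + dist p q - dist x p - dist y q) ≤ 2 * δ :=
        max_le (by linarith [dist_nonneg (x := p) (y := q)]) (by linarith)
      have hdivle : max 0 (dist x y + dist p q - dist x p - dist y q) / dist x y
          ≤ 2 * δ / dist x y := (div_le_div_iff_of_pos_right hdxy).mpr hEmax
      have heq : 2 * δ / dist x y = ε / 2 := by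
        rw [hδdef]
        field_simp
        ring
      rw [heq] at hdivle
      linarith
    · -- no small high-slope pairs: find an extreme pair by compactness
      push_neg at hA
      set β := 1 - α / 2 with hβdef
      have hβ0 : 0 < β := by rw [hβdef]; linarith
      have hβ1 : β < 1 := by rw [hβdef]; linarith
      have hβα : 1 - α < β := by rw [hβdef]; linarith
      -- a pair with slope > β exists
      obtain ⟨p₀, q₀, hp₀⟩ : ∃ p q : M, β * dist p q < f p - f q := by
        by_contra hno
        push_neg at hno
        have hlipβ : LipschitzWith β.toNNReal f := by
          apply LipschitzWith.of_dist_le_mul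
          intro p q
          rw [Real.dist_eq, Real.coe_toNNReal β hβ0.le]
          have h1 := hno p q
          have h2 := hno q p
          rw [dist_comm q p] at h2
          exact abs_le.mpr ⟨by linarith, h1⟩
        have h1 := hfmin β.toNNReal hlipβ
        have h2 : (1:ℝ) ≤ β := by
          have := NNReal.coe_le_coe.mpr h1
          rwa [NNReal.coe_one, Real.coe_toNNReal β hβ0.le] at this
        linarith
      have hp₀q₀ : p₀ ≠ q₀ := by
        intro e
        subst e
        rw [dist_self, mul_zero, sub_self] at hp₀
        exact lt_irrefl 0 hp₀
      have hd₀ : δ < dist p₀ q₀ := by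
        by_contra hle
        push_neg at hle
        have := hA p₀ q₀ hp₀q₀ hle
        have hd0 : 0 < dist p₀ q₀ := dist_pos.mpr hp₀q₀
        nlinarith
      -- the compact set of pairs
      set C := {pq : M × M | δ ≤ dist pq.1 pq.2 ∧ β * dist pq.1 pq.2 ≤ f pq.1 - f pq.2}
        with hCdef
      have hCcl : IsClosed C := by
        have c1 : Continuous fun pq : M × M => dist pq.1 pq.2 :=
          continuous_fst.dist continuous_snd
        have c2 : Continuous fun pq : M × M => f pq.1 - f pq.2 :=
          (hf.continuous.comp continuous_fst).sub (hf.continuous.comp continuous_snd)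
        exact (isClosed_le continuous_const c1).inter
          (isClosed_le (continuous_const.mul c1) c2)
      have hCne : C.Nonempty := ⟨(p₀, q₀), hd₀.le, hp₀.le⟩
      obtain ⟨⟨u, v⟩, huvC, huvmin⟩ := hCcl.isCompact.exists_isMinOn hCne
        ((continuous_fst.dist continuous_snd).continuousOn)
      obtain ⟨hδuv, hβuv⟩ := huvC
      have hduv : 0 < dist u v := lt_of_lt_of_le hδ0 hδuv
      have huv : u ≠ v := dist_pos.mp hduv
      -- (u,v) is an extreme pair
      have hext : ∀ z : M, dist u z + dist z v = dist u v → z = u ∨ z = v := by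
        intro z hz
        by_contra hzc
        push_neg at hzc
        obtain ⟨hzu, hzv⟩ := hzc
        have ha : 0 < dist u z := dist_pos.mpr (fun e => hzu e.symm)
        have hb : 0 < dist z v := dist_pos.mpr hzv
        have hsplit : β * dist u z ≤ f u - f z ∨ β * dist z v ≤ f z - f v := by
          by_contra hs
          push_neg at hs
          have h1 := hs.1
          have h2 := hs.2
          have : f u - f v < β * (dist u z + dist z v) := by linarith
          rw [hz] at this
          linarith
        rcases hsplit with hcase | hcase
        · have huz : u ≠ z := fun e => hzu e.symm
          rcases le_or_gt (dist u z) δ with hle | hlt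
          · have := hA u z huz hle
            nlinarith [ha, hβα]
          · have : (u, z) ∈ C := ⟨hlt.le, hcase⟩
            have := huvmin this
            simp only [Set.mem_setOf_eq] at this
            -- dist u v ≤ dist u z, but dist u z < dist u v
            have : dist u v ≤ dist u z := this
            linarith
        · have hzv' : z ≠ v := hzv
          rcases le_or_gt (dist z v) δ with hle | hlt
          · have := hA z v hzv' hle
            nlinarith [hb, hβα]
          · have : (z, v) ∈ C := ⟨hlt.le, hcase⟩
            have := huvmin this
            simp only [Set.mem_setOf_eq] at this
            have : dist u v ≤ dist z v := this
            linarith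
      -- apply the metric condition
      have hmet := H2 u v huv hext
      have hE0 : dist x y + dist u v - dist x u - dist y v ≤ 0 := by
        have := le_trans hmet (min_le_left _ _)
        linarith
      obtain ⟨h, hhl, hbound⟩ := molecule_witness x y u v hxy huv
      rw [max_eq_left hE0, zero_div, sub_zero] at hbound
      refine ⟨u, v, huv, ?_, h, hhl, by linarith⟩
      nlinarith [hβα, hduv, hβuv]
end

section
/- Let (M, e) be a complete pointed metric space and let f : M → ℝ satisfy f(e) = 0, have Lipschitz constant exactly 1, and be local, i.e. for every δ > 0 there exist u ≠ v ∈ M with d(u, v) < δ and f(u) − f(v) > (1 − δ)·d(u, v). Let x₁, …, x_N ∈ M and β₁, …, β_N ∈ ℝ be such that sup{ Σ_{i=1}^N βᵢ·h(xᵢ) : h : M → ℝ is 1-Lipschitz and h(e) = 0 } = 1. Then for every α ∈ (0, 1), every 1-Lipschitz g : M → ℝ with g(e) = 0 and Σ βᵢ·g(xᵢ) > 1 − α, and every ε > 0, there exists a 1-Lipschitz function h : M → ℝ with h(e) = 0 and Σ βᵢ·h(xᵢ) > 1 − α, together with points p ≠ q ∈ M such that (f(p) − h(p)) − (f(q) −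 h(q)) > (2 − ε)·d(p, q). (This expresses that every local norm-one f ∈ Lip₀(M) is a w*-Daugavet point of the unit ball of Lip₀(M).) -/
open NNReal

/-- Every local norm-one `f ∈ Lip₀(M)` over a complete pointed metric space is a
`w*`-Daugavet point of the unit ball of `Lip₀(M)`. -/
theorem local_lipschitz_function_wstar_daugavet_point {M : Type*} [MetricSpace M]
    [CompleteSpace M] (e : M) (f : M → ℝ) (hfe : f e = 0) (hf1 : LipschitzWith 1 f)
    (hfexact : ∀ K : ℝ≥0, LipschitzWith K f → 1 ≤ K)
    (hlocal : ∀ δ : ℝ, 0 < δ → ∃ u v : M, u ≠ v ∧ dist u v < δ ∧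
      f u - f v > (1 - δ) * dist u v)
    (N : ℕ) (x : Fin N → M) (β : Fin N → ℝ)
    (hnorm : IsLUB {s : ℝ | ∃ h : M → ℝ, LipschitzWith 1 h ∧ h e = 0 ∧
      s = ∑ i, β i * h (x i)} 1) :
    ∀ α : ℝ, 0 < α → α < 1 → ∀ g : M → ℝ, LipschitzWith 1 g → g e = 0 →
      (∑ i, β i * g (x i)) > 1 - α → ∀ ε : ℝ, 0 < ε →
      ∃ h : M → ℝ, LipschitzWith 1 h ∧ h e = 0 ∧ (∑ i, β i * h (x i)) > 1 - α ∧
        ∃ p q : M, p ≠ q ∧ (f p - h p) - (f q - h q) > (2 - ε) * dist p q := by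
  intro α hα hα1 g hg hge hgsum ε hε
  -- basic Lipschitz estimate for g
  have hgd : ∀ a b : M, g a - g b ≤ dist a b := by
    intro a b
    have h1 : |g a - g b| ≤ dist a b := by
      simpa [Real.dist_eq] using hg.dist_le_mul a b
    have := (abs_le.1 h1).2
    linarith
  set B := ∑ i, |β i| with hB'
  have hB : 0 ≤ B := Finset.sum_nonneg fun i _ => abs_nonneg _
  set c := (∑ i, β i * g (x i)) - (1 - α) with hc
  have hcpos : 0 < c := by simp only [hc]; linarith
  set δ := min (ε / 2) (c / (4 * B + 1)) with hδ
  have hδpos : 0 < δ := lt_min (by linarith) (div_pos hcpos (by linarith))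
  obtain ⟨u, v, huv, hd, hfd⟩ := hlocal δ hδpos
  have hd0 : 0 < dist u v := dist_pos.2 huv
  -- the perturbed function
  set h₀ : M → ℝ := fun t => min (g t) (g v - dist u v + dist t u) with hh₀
  have hlip₀ : LipschitzWith 1 h₀ := by
    have h2 : LipschitzWith 1 fun t : M => g v - dist u v + dist t u := by
      have h3 : LipschitzWith 1 fun t : M => dist t u := by
        simpa [dist_comm] using (LipschitzWith.dist_right u : LipschitzWith 1 (dist u))
      simpa using (LipschitzWith.const (g v - dist u v) : LipschitzWith 0 _).add h3
    simpa using hg.min h2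
  set h : M → ℝ := fun t => h₀ t - h₀ e with hh
  have hlip : LipschitzWith 1 h := fun a b => by
    simpa [hh, edist_sub_right] using hlip₀ a b
  have hhe : h e = 0 := by simp [hh]
  -- pointwise bounds
  have hle : ∀ t, h₀ t ≤ g t := fun t => min_le_left _ _
  have hge2 : ∀ t, g t - 2 * dist u v ≤ h₀ t := by
    intro t
    refine le_min (by linarith) ?_
    have h1 : g t - g v ≤ dist t v := hgd t v
    have h2 : dist t v ≤ dist t u + dist u v := dist_triangle t u v
    linarith
  -- values at u and v
  have hu : h₀ u = g v - dist u v := by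
    have h1 : g v - dist u v ≤ g u := by have := hgd v u; rw [dist_comm] at this; linarith
    simp only [hh₀, dist_self, add_zero]
    exact min_eq_right h1
  have hv : h₀ v = g v := by
    simp only [hh₀]
    rw [dist_comm v u]
    exact min_eq_left (by linarith)
  have he0 : h₀ e ≤ 0 := by have := hle e; rw [hge] at this; exact this
  have he1 : -(2 * dist u v) ≤ h₀ e := by have := hge2 e; rw [hge] at this; linarith
  refine ⟨h, hlip, hhe, ?_, u, v, huv, ?_⟩
  · -- sum estimate
    have key : ∀ i ∈ Finset.univ, β i * g (x i) - |β i| * (4 * dist u v) ≤ β i * h (x i) := by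
      intro i _
      have h1 := hle (x i)
      have h2 := hge2 (x i)
      have habs : |h (x i) - g (x i)| ≤ 4 * dist u v := by
        rw [abs_le]
        refine ⟨by simp only [hh]; linarith, by simp only [hh]; linarith⟩
      have h3 : |β i * (h (x i) - g (x i))| ≤ |β i| * (4 * dist u v) := by
        rw [abs_mul]
        exact mul_le_mul_of_nonneg_left habs (abs_nonneg _)
      have h4 := neg_abs_le (β i * (h (x i) - g (x i)))
      nlinarith [h4, h3]
    have hsum := Finset.sum_le_sum key
    rw [Finset.sum_sub_distrib, ← Finset.sum_mul] at hsum
    have hδ2 : δ * (4 * B + 1) ≤ c := by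
      have := min_le_right (ε / 2) (c / (4 * B + 1))
      rw [le_div_iff₀ (by linarith)] at this
      exact this
    have hdB : 4 * dist u v * B < c := by nlinarith
    simp only [hc] at hdB
    calc (1 : ℝ) - α < (∑ i, β i * g (x i)) - B * (4 * dist u v) := by
          rw [hB']; nlinarith [hdB]
      _ = (∑ i, β i * g (x i)) - (∑ i, |β i|) * (4 * dist u v) := by rw [hB']
      _ ≤ ∑ i, β i * h (x i) := hsum
  · -- Daugavet estimate at p = u, q = v
    have hδε : δ ≤ ε / 2 := min_le_left _ _
    have hhu : h u = g v - dist u v - h₀ e := by simp only [hh]; rw [hu]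
    have hhv : h v = g v - h₀ e := by simp only [hh]; rw [hv]
    rw [hhu, hhv]
    nlinarith [hfd, mul_pos hd0 (show (0:ℝ) < ε - δ by linarith)]
end

section
/- Let M be a metric space and let x, y ∈ M be distinct connectable points. Then the pair (x, y) satisfies the local Δ-condition. (In the Lipschitz-free space over M this implies that the molecule m_{x,y} is a Δ-point.) -/
/-- The pair `(x, y)` satisfies the local Δ-condition: for every `1`-Lipschitz
`f : M → ℝ`, every `θ ∈ (0,1)` with `f x - f y > θ * d(x,y)`, and every `ε > 0`,
there are points `u, v` with `0 < d(u,v) < ε` and `f u - f v > θ * d(u,v)`. -/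
def LocalDeltaCondition {M : Type*} [MetricSpace M] (x y : M) : Prop :=
  ∀ f : M → ℝ, LipschitzWith 1 f → ∀ θ : ℝ, 0 < θ → θ < 1 →
    f x - f y > θ * dist x y → ∀ ε : ℝ, 0 < ε →
      ∃ u v : M, 0 < dist u v ∧ dist u v < ε ∧ f u - f v > θ * dist u v

/-- If `x` and `y` are connectable then the pair `(x, y)` satisfies the local
Δ-condition (i.e. the molecule `m_{x,y}` is a Δ-point). -/
theorem connectable_implies_localDelta {M : Type*} [MetricSpace M] (x y : M)
    (hxy : x ≠ y)
    (hconn : ∀ ε : ℝ, 0 < ε → ∃ γ : ℝ → M,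
      LipschitzOnWith 1 γ (Set.Icc 0 (dist x y + ε)) ∧
      γ 0 = y ∧ γ (dist x y + ε) = x) :
    LocalDeltaCondition x y := by
  intro f hf θ hθ0 hθ1 hfxy ε hε
  set d0 := dist x y with hd0
  have hd0pos : 0 < d0 := dist_pos.mpr hxy
  set δ := (f x - f y - θ * d0) / (2 * θ) with hδ
  have hδpos : 0 < δ := div_pos (by linarith) (by linarith)
  obtain ⟨γ, hγlip, hγ0, hγL⟩ := hconn δ hδpos
  set L := d0 + δ with hL
  have hLpos : 0 < L := by positivity
  have hθδ : θ * δ = (f x - f y - θ * d0) / 2 := by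
    rw [hδ]; field_simp
  have hcL : θ * L < f x - f y := by
    have : θ * L = θ * d0 + θ * δ := by rw [hL]; ring
    rw [this, hθδ]; linarith
  obtain ⟨n, hn⟩ := exists_nat_gt (L / ε)
  have hnpos : (0 : ℝ) < n := lt_trans (div_pos hLpos hε) hn
  set h := L / n with hh
  have hhpos : 0 < h := div_pos hLpos hnpos
  have hhε : h < ε := by
    rw [hh, div_lt_iff₀ hnpos]
    calc L = (L / ε) * ε := by field_simp
    _ < n * ε := by exact mul_lt_mul_of_pos_right hn hε
    _ = ε * n := by ring
  have hnh : (n : ℝ) * h = L := by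
    rw [hh]; field_simp
  -- points t i = i * h are in the interval
  have htmem : ∀ i : ℕ, i ≤ n → (i : ℝ) * h ∈ Set.Icc 0 L := by
    intro i hi
    constructor
    · positivity
    · calc (i : ℝ) * h ≤ (n : ℝ) * h := by
            apply mul_le_mul_of_nonneg_right _ hhpos.le
            exact_mod_cast hi
      _ = L := hnh
  have hγlip' := lipschitzOnWith_iff_dist_le_mul.mp hγlip
  -- find a good step
  have key : ∃ i ∈ Finset.range n, f (γ ((i + 1 : ℕ) * h)) - f (γ ((i : ℕ) * h)) > θ * h := by
    by_contra hcon
    push_neg at hcon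
    have hsum : ∑ i ∈ Finset.range n,
        (f (γ ((i + 1 : ℕ) * h)) - f (γ ((i : ℕ) * h))) = f (γ ((n : ℕ) * h)) - f (γ ((0 : ℕ) * h)) :=
      Finset.sum_range_sub (fun i => f (γ ((i : ℕ) * h))) n
    have hend : f (γ ((n : ℕ) * h)) = f x := by rw [hnh, hγL]
    have hstart : f (γ ((0 : ℕ) * h)) = f y := by norm_num [hγ0]
    have hle : f x - f y ≤ (n : ℝ) * (θ * h) := by
      rw [← hend, ← hstart, ← hsum]
      calc ∑ i ∈ Finset.range n, (f (γ ((i + 1 : ℕ) * h)) - f (γ ((i : ℕ) * h)))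
          ≤ ∑ _i ∈ Finset.range n, θ * h := Finset.sum_le_sum (fun i hi => hcon i hi)
      _ = (n : ℝ) * (θ * h) := by simp [mul_comm]
    have : (n : ℝ) * (θ * h) = θ * L := by rw [← hnh]; ring
    linarith [hcL]
  obtain ⟨i, hi, hgood⟩ := key
  have hi' : i < n := Finset.mem_range.mp hi
  refine ⟨γ ((i + 1 : ℕ) * h), γ ((i : ℕ) * h), ?_, ?_, ?_⟩
  case _ =>
    -- positivity of distance: f u - f v > θ h > 0 and f u - f v ≤ dist u v
    have hfd : f (γ ((i + 1 : ℕ) * h)) - f (γ ((i : ℕ) * h)) ≤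
        dist (γ ((i + 1 : ℕ) * h)) (γ ((i : ℕ) * h)) := by
      have := hf.dist_le_mul (γ ((i + 1 : ℕ) * h)) (γ ((i : ℕ) * h))
      rw [NNReal.coe_one, one_mul] at this
      calc f (γ ((i + 1 : ℕ) * h)) - f (γ ((i : ℕ) * h))
          ≤ |f (γ ((i + 1 : ℕ) * h)) - f (γ ((i : ℕ) * h))| := le_abs_self _
      _ = dist (f (γ ((i + 1 : ℕ) * h))) (f (γ ((i : ℕ) * h))) := (Real.dist_eq _ _).symm
      _ ≤ _ := this
    nlinarith [mul_pos hθ0 hhpos]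
  all_goals
    have hdle : dist (γ ((i + 1 : ℕ) * h)) (γ ((i : ℕ) * h)) ≤ h := by
      have h1 := htmem (i + 1) hi'
      have h2 := htmem i (le_of_lt hi')
      have := hγlip' _ h1 _ h2
      rw [NNReal.coe_one, one_mul, Real.dist_eq] at this
      calc dist (γ ((i + 1 : ℕ) * h)) (γ ((i : ℕ) * h)) ≤ |(i + 1 : ℕ) * h - (i : ℕ) * h| := this
      _ = h := by push_cast; rw [show ((i : ℝ) + 1) * h - (i : ℝ) * h = h by ring]; exact abs_of_pos hhpos
  case _ => linarith
  case _ =>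
    calc θ * dist (γ ((i + 1 : ℕ) * h)) (γ ((i : ℕ) * h)) ≤ θ * h :=
          mul_le_mul_of_nonneg_left hdle hθ0.le
    _ < _ := hgood
end

section
/- Let M be a metric space and let x ≠ y ∈ M. The following are equivalent: (A) for every function f : M → ℝ with Lipschitz constant exactly 1, every α ∈ (0, 1) with f(x) − f(y) > (1 − α)·d(x, y), and every ε > 0, there exist u ≠ v ∈ M such that f(u) − f(v) > (1 − α)·d(u, v) and ‖m_{x,y} − m_{u,v}‖ > 2 − ε; (B) the pair (x, y) satisfies the local Δ-condition. (Condition (A) says exactly that the molecule m_{x,y} is a Δ-point of the unit ball of the Lipschitz-free space over M, tested on molecules.) -/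
open NNReal

private lemma lipOne {M : Type*} [MetricSpace M] {f : M → ℝ}
    (h : ∀ p q : M, |f p - f q| ≤ dist p q) : LipschitzWith 1 f :=
  LipschitzWith.of_dist_le_mul fun p q => by
    rw [Real.dist_eq]; simpa using h p q

private lemma lip_bound {M : Type*} [MetricSpace M] {f : M → ℝ}
    (hf : LipschitzWith 1 f) (p q : M) : |f p - f q| ≤ dist p q := by
  have := hf.dist_le_mul p q
  rw [Real.dist_eq] at this
  simpa using this

set_option maxHeartbeats 2000000 in
/-- The molecule `m_{x,y}` is a Δ-point (tested on molecules) if and only if the pair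
`(x, y)` satisfies the local Δ-condition. -/
theorem molecule_delta_point_iff_localDelta {M : Type*} [MetricSpace M]
    (x y : M) (hxy : x ≠ y) :
    (∀ f : M → ℝ, LipschitzWith 1 f → (∀ K : ℝ≥0, LipschitzWith K f → 1 ≤ K) →
      ∀ α : ℝ, 0 < α → α < 1 → f x - f y > (1 - α) * dist x y → ∀ ε : ℝ, 0 < ε →
        ∃ u v : M, u ≠ v ∧ f u - f v > (1 - α) * dist u v ∧
          ∃ h : M → ℝ, LipschitzWith 1 h ∧
            (h x - h y) / dist x y - (h u - h v) / dist u v > 2 - ε)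
    ↔ LocalDeltaCondition x y := by
  obtain ⟨a, ha⟩ : ∃ t : ℝ, t = dist x y := ⟨_, rfl⟩
  have a_pos : (0:ℝ) < a := by rw [ha]; exact dist_pos.mpr hxy
  rw [show dist x y = a from ha.symm]
  constructor
  · -- (A) → (B)
    intro hA f hf θ hθ0 hθ1 hfxy ε hε
    rw [show dist x y = a from ha.symm] at hfxy
    obtain ⟨D, hDdef⟩ : ∃ t : ℝ, t = f x - f y := ⟨_, rfl⟩
    rw [← hDdef] at hfxy
    have hD0 : 0 < D := lt_trans (by positivity) hfxy
    have hDa : D ≤ a := by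
      have := le_of_abs_le (lip_bound hf x y)
      rw [← ha, ← hDdef] at this
      linarith
    -- constants
    obtain ⟨β, hβdef⟩ : ∃ t : ℝ, t = ε * D / (2 * a) := ⟨_, rfl⟩
    obtain ⟨ε', hε'def⟩ : ∃ t : ℝ, t = ε / (2 * (a + ε)) := ⟨_, rfl⟩
    obtain ⟨denom, hdenomdef⟩ : ∃ t : ℝ, t = (1 - ε') * a + (2 - ε') * ε := ⟨_, rfl⟩
    have hε'0 : 0 < ε' := by rw [hε'def]; positivity
    have hε'lt : ε' < 1 / 2 := by
      rw [hε'def, div_lt_iff₀ (by positivity)]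
      nlinarith
    have hβ0 : 0 < β := by rw [hβdef]; positivity
    have hdenom : 0 < denom := by
      have h1 : (0:ℝ) < (1 - ε') * a := by nlinarith
      have h2 : (0:ℝ) < (2 - ε') * ε := by nlinarith
      rw [hdenomdef]; linarith
    obtain ⟨c₀, hc₀def⟩ : ∃ t : ℝ, t = (D + β) / denom := ⟨_, rfl⟩
    have haε : (0:ℝ) < a + ε := by linarith
    have hkey : ε' * (a + ε) = ε / 2 := by
      rw [hε'def]
      field_simp
    have hβa : β * a = ε * D / 2 := by
      rw [hβdef]; field_simp
    have hc₀lt : c₀ < D / a := by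
      rw [hc₀def, div_lt_div_iff₀ hdenom a_pos]
      have hexp : D * denom = D * a + 2 * D * ε - D * (ε' * (a + ε)) := by
        rw [hdenomdef]; ring
      rw [hexp, hkey]
      linarith only [hβa, mul_pos hD0 hε]
    have hθlt : θ < D / a := by
      rw [lt_div_iff₀ a_pos]; linarith [hfxy]
    obtain ⟨c, hcdef⟩ : ∃ t : ℝ, t = (max θ c₀ + D / a) / 2 := ⟨_, rfl⟩
    have hmaxlt : max θ c₀ < D / a := max_lt hθlt hc₀lt
    have hclt : c < D / a := by rw [hcdef]; linarith
    have hcgtm : max θ c₀ < c := by rw [hcdef]; linarith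
    have hcθ : θ < c := lt_of_le_of_lt (le_max_left _ _) hcgtm
    have hcc₀ : c₀ < c := lt_of_le_of_lt (le_max_right _ _) hcgtm
    have hc0 : 0 < c := lt_trans hθ0 hcθ
    have hc1 : c ≤ 1 := by
      have : D / a ≤ 1 := (_root_.div_le_one a_pos).mpr hDa
      linarith
    have hca : c * a < D := by
      have := (lt_div_iff₀ a_pos).mp hclt
      linarith
    -- the test function F
    obtain ⟨F, hFdef⟩ : ∃ F : M → ℝ,
        F = fun t => max (min (f t - f y) (D - c * dist t x)) (c * dist t y - β) := ⟨_, rfl⟩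
    have hFapp : ∀ t : M,
        F t = max (min (f t - f y) (D - c * dist t x)) (c * dist t y - β) := by
      intro t; rw [hFdef]
    have hFlip : LipschitzWith 1 F := by
      apply lipOne
      intro p q
      have h1 : |f p - f y - (f q - f y)| ≤ dist p q := by
        have := lip_bound hf p q; simpa using this
      have h2 : |D - c * dist p x - (D - c * dist q x)| ≤ dist p q := by
        have heq0 : D - c * dist p x - (D - c * dist q x) = c * (dist q x - dist p x) := by
          ring
        have habs' : |dist q x - dist p x| ≤ dist p q := by
          have := abs_dist_sub_le q p x
          rwa [dist_comm q p] at this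
        rw [heq0, abs_mul, abs_of_nonneg hc0.le]
        calc c * |dist q x - dist p x| ≤ 1 * |dist q x - dist p x| :=
              mul_le_mul_of_nonneg_right hc1 (abs_nonneg _)
          _ = |dist q x - dist p x| := one_mul _
          _ ≤ dist p q := habs'
      have h3 : |c * dist p y - β - (c * dist q y - β)| ≤ dist p q := by
        have habs : |dist p y - dist q y| ≤ dist p q := abs_dist_sub_le p q y
        have heq0 : c * dist p y - β - (c * dist q y - β) = c * (dist p y - dist q y) := by
          ring
        rw [heq0, abs_mul, abs_of_nonneg hc0.le]
        calc c * |dist p y - dist q y| ≤ 1 * |dist p y - dist q y| :=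
              mul_le_mul_of_nonneg_right hc1 (abs_nonneg _)
          _ = |dist p y - dist q y| := one_mul _
          _ ≤ dist p q := habs
      have hmin : |min (f p - f y) (D - c * dist p x) - min (f q - f y) (D - c * dist q x)|
          ≤ dist p q := le_trans (abs_min_sub_min_le_max _ _ _ _) (max_le h1 h2)
      rw [hFapp p, hFapp q]
      exact le_trans (abs_max_sub_max_le_max _ _ _ _) (max_le hmin h3)
    have hFx : F x = D := by
      rw [hFapp x, dist_self, mul_zero, sub_zero, ← hDdef, min_self, ← ha]
      exact max_eq_left (by linarith)
    have hFy : F y = 0 := by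
      rw [hFapp y, sub_self, dist_self, mul_zero, zero_sub, dist_comm y x, ← ha,
        min_eq_left (by linarith : (0:ℝ) ≤ D - c * a), max_eq_left (by linarith : -β ≤ (0:ℝ))]
    -- normalization: exact Lipschitz constant
    obtain ⟨L, hLdef⟩ : ∃ t : ℝ≥0, t = sInf {K : ℝ≥0 | LipschitzWith K F} := ⟨_, rfl⟩
    have hSne : {K : ℝ≥0 | LipschitzWith K F}.Nonempty := ⟨1, hFlip⟩
    have hLmem : LipschitzWith L F := by
      apply LipschitzWith.of_dist_le_mul
      intro p q
      rcases eq_or_ne p q with rfl | hpq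
      · simp
      · have hd : 0 < dist p q := dist_pos.mpr hpq
        have hr0 : 0 ≤ dist (F p) (F q) / dist p q := by positivity
        have hrle : (⟨dist (F p) (F q) / dist p q, hr0⟩ : ℝ≥0) ≤ L := by
          rw [hLdef]
          apply le_csInf hSne
          intro K hK
          have h2 : dist (F p) (F q) ≤ (K:ℝ) * dist p q := hK.dist_le_mul p q
          have h3 : dist (F p) (F q) / dist p q ≤ (K:ℝ) := by
            rw [div_le_iff₀ hd]; linarith
          exact_mod_cast h3
        have h4 : dist (F p) (F q) / dist p q ≤ (L:ℝ) := hrle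
        have h5 : dist (F p) (F q) = dist (F p) (F q) / dist p q * dist p q := by
          field_simp
        rw [h5]
        exact mul_le_mul_of_nonneg_right h4 dist_nonneg
    have hL1 : L ≤ 1 := by
      rw [hLdef]
      exact csInf_le (OrderBot.bddBelow _) hFlip
    have hLD : D ≤ (L:ℝ) * a := by
      have := hLmem.dist_le_mul x y
      rw [Real.dist_eq, hFx, hFy, sub_zero, abs_of_pos hD0, ← ha] at this
      exact this
    have hL0 : (0:ℝ) < (L:ℝ) := by
      nlinarith only [lt_of_lt_of_le hD0 hLD, a_pos, NNReal.coe_nonneg L]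
    have hLne : L ≠ 0 := by
      intro h0
      rw [h0] at hL0
      simp at hL0
    obtain ⟨Fb, hFbdef⟩ : ∃ G : M → ℝ, G = fun t => F t / (L:ℝ) := ⟨_, rfl⟩
    have hFbapp : ∀ t : M, Fb t = F t / (L:ℝ) := by intro t; rw [hFbdef]
    have hFblip : LipschitzWith 1 Fb := by
      apply lipOne
      intro p q
      have h2 : |F p - F q| ≤ (L:ℝ) * dist p q := by
        have := hLmem.dist_le_mul p q; rwa [Real.dist_eq] at this
      have h3 : |Fb p - Fb q| = |F p - F q| / (L:ℝ) := by
        rw [hFbapp p, hFbapp q, div_sub_div_same, abs_div, abs_of_pos hL0]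
      rw [h3, div_le_iff₀ hL0]
      linarith only [h2, (by ring : (L:ℝ) * dist p q = dist p q * (L:ℝ))]
    have hFexact : ∀ K : ℝ≥0, LipschitzWith K Fb → 1 ≤ K := by
      intro K hK
      have hm : LipschitzWith (K * L) F := by
        apply LipschitzWith.of_dist_le_mul
        intro p q
        have h2 : |Fb p - Fb q| ≤ (K:ℝ) * dist p q := by
          have := hK.dist_le_mul p q; rwa [Real.dist_eq] at this
        have h3 : |F p - F q| / (L:ℝ) ≤ (K:ℝ) * dist p q := by
          have heq : |Fb p - Fb q| = |F p - F q| / (L:ℝ) := by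
            rw [hFbapp p, hFbapp q, div_sub_div_same, abs_div, abs_of_pos hL0]
          rwa [heq] at h2
        have h4 : |F p - F q| ≤ (K:ℝ) * dist p q * (L:ℝ) := (div_le_iff₀ hL0).mp h3
        have h5 : ((K * L : ℝ≥0):ℝ) = (K:ℝ) * (L:ℝ) := by push_cast; ring
        rw [Real.dist_eq, h5]
        linarith only [h4,
          (by ring : (K:ℝ) * dist p q * (L:ℝ) = (K:ℝ) * (L:ℝ) * dist p q)]
      have hle : L ≤ K * L := by
        have h6 : sInf {K : ℝ≥0 | LipschitzWith K F} ≤ K * L :=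
          csInf_le (OrderBot.bddBelow _) hm
        rwa [← hLdef] at h6
      by_contra hlt
      push_neg at hlt
      have hKL : K * L < 1 * L := mul_lt_mul_of_pos_right hlt (zero_lt_iff.mpr hLne)
      rw [one_mul] at hKL
      exact absurd hle (not_le.mpr hKL)
    have hcL : c < (L:ℝ) := by
      have hDaL : D / a ≤ (L:ℝ) := (div_le_iff₀ a_pos).mpr (by linarith)
      linarith
    have hα'0 : 0 < 1 - c / (L:ℝ) := by
      have : c / (L:ℝ) < 1 := (_root_.div_lt_one hL0).mpr hcL
      linarith
    have hα'1 : 1 - c / (L:ℝ) < 1 := by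
      have : 0 < c / (L:ℝ) := by positivity
      linarith
    have h1mα : 1 - (1 - c / (L:ℝ)) = c / (L:ℝ) := by ring
    have hyp : Fb x - Fb y > (1 - (1 - c / (L:ℝ))) * a := by
      have hFbxy : Fb x - Fb y = D / (L:ℝ) := by
        rw [hFbapp x, hFbapp y, div_sub_div_same, hFx, hFy, sub_zero]
      rw [hFbxy, h1mα, div_mul_eq_mul_div, gt_iff_lt, div_lt_div_iff_of_pos_right hL0]
      linarith
    obtain ⟨u, v, huvne, hsteepb, w, hwlip, hS⟩ :=
      hA Fb hFblip hFexact (1 - c / (L:ℝ)) hα'0 hα'1 hyp ε' hε'0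
    rw [h1mα] at hsteepb
    obtain ⟨b, hb⟩ : ∃ t : ℝ, t = dist u v := ⟨_, rfl⟩
    rw [← hb] at hsteepb hS
    have hb0 : 0 < b := by rw [hb]; exact dist_pos.mpr huvne
    have hsteepF : F u - F v > c * b := by
      have h5 : Fb u - Fb v = (F u - F v) / (L:ℝ) := by
        rw [hFbapp u, hFbapp v, div_sub_div_same]
      have h6 : c / (L:ℝ) * b = c * b / (L:ℝ) := by ring
      rw [h5, h6] at hsteepb
      exact (div_lt_div_iff_of_pos_right hL0).mp hsteepb
    have hFle : ∀ t : M, c * dist t y - β ≤ F t := by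
      intro t; rw [hFapp t]; exact le_max_right _ _
    -- Step A : at u the min part is active
    have hstepA : F u = min (f u - f y) (D - c * dist u x) := by
      rcases le_or_gt (min (f u - f y) (D - c * dist u x)) (c * dist u y - β) with hcase | hcase
      · exfalso
        have hFu : F u = c * dist u y - β := by
          rw [hFapp u]; exact max_eq_right hcase
        have hFv : c * dist v y - β ≤ F v := hFle v
        have habs : dist u y - dist v y ≤ b := by
          have := le_of_abs_le (abs_dist_sub_le u v y)
          rw [← hb] at this
          linarith
        have h7 : c * (dist u y - dist v y) ≤ c * b := mul_le_mul_of_nonneg_left habs hc0.le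
        have h8 : F u - F v ≤ c * (dist u y - dist v y) := by
          rw [hFu]
          linarith only [hFv,
            (by ring : c * (dist u y - dist v y) = c * dist u y - c * dist v y)]
        linarith only [h7, h8, hsteepF]
      · rw [hFapp u]; exact max_eq_left hcase.le
    -- Step B : at v the f part beats the cone at x
    have hstepB : f v - f y < D - c * dist v x := by
      by_contra hge
      push_neg at hge
      have hFv : D - c * dist v x ≤ F v := by
        have hminv : min (f v - f y) (D - c * dist v x) = D - c * dist v x := min_eq_right hge
        rw [hFapp v]
        calc D - c * dist v x = min (f v - f y) (D - c * dist v x) := hminv.symm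
          _ ≤ _ := le_max_left _ _
      have hFu : F u ≤ D - c * dist u x := by rw [hstepA]; exact min_le_right _ _
      have habs : dist v x - dist u x ≤ b := by
        have h6 := le_of_abs_le (abs_dist_sub_le v u x)
        have h7 : dist v u = b := by rw [dist_comm, ← hb]
        linarith
      have h8 : c * (dist v x - dist u x) ≤ c * b := mul_le_mul_of_nonneg_left habs hc0.le
      linarith only [hFv, hFu, h8, hsteepF,
        (by ring : c * (dist v x - dist u x) = c * dist v x - c * dist u x)]
    have hFvge : f v - f y ≤ F v := by
      rw [hFapp v]
      calc f v - f y = min (f v - f y) (D - c * dist v x) := (min_eq_left hstepB.le).symm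
        _ ≤ _ := le_max_left _ _
    have hFule : F u ≤ f u - f y := by rw [hstepA]; exact min_le_left _ _
    have hfsteep : f u - f v > c * b := by linarith only [hFule, hFvge, hsteepF]
    have hfsteepθ : f u - f v > θ * b := by
      have h10 := mul_lt_mul_of_pos_right hcθ hb0
      linarith only [h10, hfsteep]
    have hdux : c * dist u x ≤ D - F u := by
      have : F u ≤ D - c * dist u x := by rw [hstepA]; exact min_le_right _ _
      linarith
    have hdvy : c * dist v y ≤ F v + β := by
      have := hFle v
      linarith
    -- extract the geometric information from the norming function w
    have hAa : w x - w y ≤ a := by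
      have := le_of_abs_le (lip_bound hwlip x y)
      rw [← ha] at this
      linarith
    have hBb : w v - w u ≤ b := by
      have := le_of_abs_le (lip_bound hwlip v u)
      rw [dist_comm v u, ← hb] at this
      linarith
    have hwxu : w x - w u ≤ dist u x := by
      have := le_of_abs_le (lip_bound hwlip x u)
      rw [dist_comm x u] at this
      linarith
    have hwvy : w v - w y ≤ dist v y := le_of_abs_le (lip_bound hwlip v y)
    have hflip : (w u - w v) / b = -((w v - w u) / b) := by ring
    rw [hflip, sub_neg_eq_add] at hS
    have hA1 : (w x - w y) / a ≤ 1 := (_root_.div_le_one a_pos).mpr hAa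
    have hB1 : (w v - w u) / b ≤ 1 := (_root_.div_le_one hb0).mpr hBb
    have hA2 : (1 - ε') * a < w x - w y := by
      have : 1 - ε' < (w x - w y) / a := by linarith only [hS, hB1]
      exact (lt_div_iff₀ a_pos).mp this
    have hB2 : (1 - ε') * b < w v - w u := by
      have : 1 - ε' < (w v - w u) / b := by linarith only [hS, hA1]
      exact (lt_div_iff₀ hb0).mp this
    have hSig : (1 - ε') * (a + b) < dist u x + dist v y := by
      linarith only [hA2, hB2, hwxu, hwvy]
    have hsum : c * (dist u x + dist v y) < D + β - c * b := by
      linarith only [hdux, hdvy, hsteepF,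
        (by ring : c * (dist u x + dist v y) = c * dist u x + c * dist v y)]
    have hDβ : D + β = c₀ * denom := by
      rw [hc₀def, div_mul_cancel₀ _ hdenom.ne']
    have hc₀c : c₀ * denom ≤ c * denom := mul_le_mul_of_nonneg_right hcc₀.le hdenom.le
    have hfin : dist u x + dist v y + b < denom := by
      have h9 : c * (dist u x + dist v y + b) < c * denom := by
        linarith only [hsum, hDβ, hc₀c,
          (by ring : c * (dist u x + dist v y + b) = c * (dist u x + dist v y) + c * b)]
      exact (mul_lt_mul_iff_right₀ hc0).mp h9
    have hbε : b < ε := by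
      rw [hdenomdef] at hfin
      have hq : (2 - ε') * b < (2 - ε') * ε := by linarith only [hSig, hfin]
      exact (mul_lt_mul_iff_right₀ (by linarith only [hε'lt] : (0:ℝ) < 2 - ε')).mp hq
    refine ⟨u, v, ?_, ?_, ?_⟩
    · rw [← hb]; exact hb0
    · rw [← hb]; exact hbε
    · rw [← hb]; exact hfsteepθ
  · -- (B) → (A)
    intro hB f hf _hex α hα0 hα1 hfxy ε hε
    have hfxy' : f x - f y > (1 - α) * dist x y := by rw [← ha]; exact hfxy
    obtain ⟨u, v, hb0, hbs, hsteep⟩ :=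
      hB f hf (1 - α) (by linarith) (by linarith) hfxy' (ε * a / 2) (by positivity)
    refine ⟨u, v, dist_pos.mp hb0, hsteep, ?_⟩
    obtain ⟨b, hb⟩ : ∃ t : ℝ, t = dist u v := ⟨_, rfl⟩
    rw [← hb] at hb0 hbs hsteep ⊢
    obtain ⟨g, hgdef⟩ : ∃ g : M → ℝ, g = fun t => min (dist t y) a := ⟨_, rfl⟩
    have hgapp : ∀ t : M, g t = min (dist t y) a := by intro t; rw [hgdef]
    have hglip : LipschitzWith 1 g := by
      apply lipOne
      intro p q
      rw [hgapp p, hgapp q]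
      refine le_trans (abs_min_sub_min_le_max _ _ _ _) (max_le (abs_dist_sub_le p q y) ?_)
      simpa using dist_nonneg
    obtain ⟨w, hwdef⟩ : ∃ w : M → ℝ, w = fun t => max (g t) (g v + 2 * b - dist t v) :=
      ⟨_, rfl⟩
    have hwapp : ∀ t : M, w t = max (g t) (g v + 2 * b - dist t v) := by intro t; rw [hwdef]
    have hwlip : LipschitzWith 1 w := by
      apply lipOne
      intro p q
      rw [hwapp p, hwapp q]
      refine le_trans (abs_max_sub_max_le_max _ _ _ _) (max_le (lip_bound hglip p q) ?_)
      rw [show g v + 2 * b - dist p v - (g v + 2 * b - dist q v) = dist q v - dist p v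
        from by ring]
      exact le_trans (abs_dist_sub_le q p v) (le_of_eq (dist_comm q p))
    refine ⟨w, hwlip, ?_⟩
    have hguv : g u ≤ g v + b := by
      have := le_of_abs_le (lip_bound hglip u v)
      rw [← hb] at this
      linarith
    have hwu : w u = g v + 2 * b - b := by
      rw [hwapp u, ← hb]
      exact max_eq_right (by linarith)
    have hwv : w v = g v + 2 * b := by
      rw [hwapp v, dist_self, sub_zero]
      exact max_eq_right (by linarith)
    have hwuv : w u - w v = -b := by rw [hwu, hwv]; ring
    have hwx : a ≤ w x := by
      have hgx : g x = a := by
        rw [hgapp x, ← ha, min_self]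
      calc a = g x := hgx.symm
        _ ≤ w x := by rw [hwapp x]; exact le_max_left _ _
    have hwy : w y ≤ 2 * b := by
      rw [hwapp y]
      apply max_le
      · have hgy : g y = 0 := by
          rw [hgapp y, dist_self]; exact min_eq_left a_pos.le
        rw [hgy]; linarith
      · have h1 : g v ≤ dist v y := by rw [hgapp v]; exact min_le_left _ _
        have h2 : dist v y = dist y v := dist_comm v y
        linarith
    have key1 : (w u - w v) / b = -1 := by
      rw [hwuv, neg_div, div_self hb0.ne']
    rw [key1]
    have h3 : (a - 2 * b) / a ≤ (w x - w y) / a :=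
      (div_le_div_iff_of_pos_right a_pos).mpr (by linarith)
    have h4 : 1 - ε < (a - 2 * b) / a := by
      rw [lt_div_iff₀ a_pos]
      linarith only [hbs]
    linarith only [h3, h4]
end

section
/- Let M be a complete metric space and let x ≠ y ∈ M be such that the pair (x, y) satisfies the local Δ-condition. Then for every r with 0 < r < d(x, y) and every ε > 0, the closed balls B(x, r + ε) and B(y, d(x, y) − r + ε) in M have nonempty intersection. If moreover M is compact, then for every r with 0 < r < d(x, y) there exists z ∈ M with d(z, x) = r and d(z, y) = d(x, y) − r. -/
lemma localDelta_key {M : Type*} [MetricSpace M] (x y : M) (h : LocalDeltaCondition x y)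
    (r ε : ℝ) (hr : 0 < r) (hrd : r < dist x y) (hε : 0 < ε) :
    ∃ z : M, dist z x ≤ r + ε ∧ dist z y ≤ dist x y - r + ε := by
  by_contra hcon
  push_neg at hcon
  set D := dist x y with hD
  have hε2 : 0 < ε / 2 := by linarith
  set A : Set M := Metric.closedBall x (r + ε / 2) with hA
  have hxA : x ∈ A := by
    simp only [hA, Metric.mem_closedBall, dist_self]
    linarith
  have hAne : A.Nonempty := ⟨x, hxA⟩
  set g : M → ℝ := fun t => max (r - dist t x) 0 with hg
  set k : M → ℝ := fun t => max (D - r - dist t y) 0 with hk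
  set ψ : M → ℝ := fun t => min 1 ((2 / ε) * Metric.infDist t A) with hψ
  set f : M → ℝ := fun t => (1 / 3) * (g t - k t) - (ε / 6) * ψ t with hf
  -- Basic facts
  have hK1 : ∀ t : M, dist t x ≤ r + ε → ¬ dist t y ≤ D - r + ε := by
    intro t h1 h2
    exact (hcon t h1).not_ge h2
  have hgnn : ∀ t, 0 ≤ g t := fun t => le_max_right _ _
  have hknn : ∀ t, 0 ≤ k t := fun t => le_max_right _ _
  have hgpos : ∀ t, 0 < g t → dist t x < r := by
    intro t ht
    by_contra hle
    push_neg at hle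
    have : g t = 0 := max_eq_right (by linarith)
    linarith
  have hkpos : ∀ t, 0 < k t → dist t y < D - r := by
    intro t ht
    by_contra hle
    push_neg at hle
    have : k t = 0 := max_eq_right (by linarith)
    linarith
  have hgLip : ∀ u v : M, g u ≤ g v + dist u v := by
    intro u v
    apply max_le
    · have h1 : r - dist v x ≤ g v := le_max_left _ _
      have h2 : dist v x ≤ dist u v + dist u x := by
        have := dist_triangle v u x
        have hc : dist v u = dist u v := dist_comm v u
        linarith
      linarith
    · have h2 : (0:ℝ) ≤ g v := hgnn v
      have h3 : (0:ℝ) ≤ dist u v := dist_nonneg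
      linarith
  have hkLip : ∀ u v : M, k u ≤ k v + dist u v := by
    intro u v
    apply max_le
    · have h1 : D - r - dist v y ≤ k v := le_max_left _ _
      have h2 : dist v y ≤ dist u v + dist u y := by
        have := dist_triangle v u y
        have hc : dist v u = dist u v := dist_comm v u
        linarith
      linarith
    · have h2 : (0:ℝ) ≤ k v := hknn v
      have h3 : (0:ℝ) ≤ dist u v := dist_nonneg
      linarith
  have hψA : ∀ t ∈ A, ψ t = 0 := by
    intro t ht
    simp only [hψ, Metric.infDist_zero_of_mem ht, mul_zero]
    exact min_eq_right zero_le_one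
  have hK2 : ∀ t : M, dist t y ≤ D - r + ε / 2 → ε / 2 ≤ Metric.infDist t A := by
    intro t ht
    by_contra hlt
    push_neg at hlt
    obtain ⟨a, haA, hta⟩ := (Metric.infDist_lt_iff hAne).mp hlt
    have haA' : dist a x ≤ r + ε / 2 := by simpa [hA, Metric.mem_closedBall] using haA
    have hay : dist a y ≤ D - r + ε := by
      have := dist_triangle a t y
      have h2 : dist a t = dist t a := dist_comm a t
      linarith
    exact hK1 a (by linarith) hay
  have hψB : ∀ t : M, dist t y ≤ D - r + ε / 2 → ψ t = 1 := by
    intro t ht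
    have h1 := hK2 t ht
    have h2 : 1 ≤ (2 / ε) * Metric.infDist t A := by
      have h3 : (2 / ε) * (ε / 2) ≤ (2 / ε) * Metric.infDist t A := by
        apply mul_le_mul_of_nonneg_left h1 (by positivity)
      have h4 : (2 / ε) * (ε / 2) = 1 := by field_simp
      linarith
    simp only [hψ]
    exact min_eq_left h2
  have hψnn : ∀ t, 0 ≤ ψ t := by
    intro t
    apply le_min zero_le_one
    have := Metric.infDist_nonneg (x := t) (s := A)
    positivity
  have hψLip : ∀ u v : M, ψ u ≤ ψ v + (2 / ε) * dist u v := by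
    intro u v
    have h1 : Metric.infDist u A ≤ Metric.infDist v A + dist u v :=
      Metric.infDist_le_infDist_add_dist
    have h2 : (2 / ε) * Metric.infDist u A ≤
        (2 / ε) * Metric.infDist v A + (2 / ε) * dist u v := by
      have := mul_le_mul_of_nonneg_left h1 (by positivity : (0:ℝ) ≤ 2 / ε)
      linarith [this, mul_add (2 / ε) (Metric.infDist v A) (dist u v)]
    have h3 : ψ u ≤ min 1 ((2 / ε) * Metric.infDist v A + (2 / ε) * dist u v) :=
      min_le_min le_rfl h2
    rcases le_total (1:ℝ) ((2 / ε) * Metric.infDist v A) with hc | hc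
    · have h4 : min 1 ((2 / ε) * Metric.infDist v A + (2 / ε) * dist u v) ≤ 1 :=
        min_le_left _ _
      have h5 : ψ v = 1 := min_eq_left hc
      have h6 : (0:ℝ) ≤ (2 / ε) * dist u v := by positivity
      linarith
    · have h4 : min 1 ((2 / ε) * Metric.infDist v A + (2 / ε) * dist u v) ≤
          (2 / ε) * Metric.infDist v A + (2 / ε) * dist u v := min_le_right _ _
      have h5 : ψ v = (2 / ε) * Metric.infDist v A := min_eq_right hc
      linarith
  have hψd : ∀ u v : M, (ε / 6) * ψ u ≤ (ε / 6) * ψ v + dist u v / 3 := by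
    intro u v
    have h1 := hψLip u v
    have h2 := mul_le_mul_of_nonneg_left h1 (by positivity : (0:ℝ) ≤ ε / 6)
    have h3 : (ε / 6) * ((2 / ε) * dist u v) = dist u v / 3 := by
      field_simp
      ring
    nlinarith [h2]
  -- f is 1-Lipschitz
  have hLip : LipschitzWith 1 f := by
    apply LipschitzWith.of_dist_le_mul
    intro u v
    rw [Real.dist_eq, NNReal.coe_one, one_mul]
    rw [abs_le]
    have h1 := hgLip u v
    have h2 := hgLip v u
    have h3 := hkLip u v
    have h4 := hkLip v u
    have h5 := hψd u v
    have h6 := hψd v u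
    have hcomm : dist v u = dist u v := dist_comm v u
    constructor <;> simp only [hf] <;> linarith
  -- values at x and y
  have hgx : g x = r := by
    simp only [hg, dist_self, sub_zero]
    exact max_eq_left (by linarith)
  have hkx : k x = 0 := by
    simp only [hk, ← hD]
    exact max_eq_right (by linarith)
  have hψx : ψ x = 0 := hψA x hxA
  have hgy : g y = 0 := by
    simp only [hg, dist_comm y x, ← hD]
    exact max_eq_right (by linarith)
  have hky : k y = D - r := by
    simp only [hk, dist_self, sub_zero]
    exact max_eq_left (by linarith)
  have hψy : ψ y = 1 := hψB y (by simp only [dist_self]; linarith)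
  have hfxy : f x - f y > (1 / 3) * D := by
    simp only [hf, hgx, hkx, hψx, hgy, hky, hψy]
    nlinarith
  -- apply the Δ-condition
  obtain ⟨u, v, hd0, hdε, hslope⟩ :=
    h f hLip (1 / 3) (by norm_num) (by norm_num) hfxy (ε / 2) hε2
  -- local estimate: f u - f v ≤ (1/3) * dist u v
  have hloc : f u - f v ≤ (1 / 3) * dist u v := by
    by_cases hgc : 0 < g u ∨ 0 < g v
    · -- near x : both points in A
      have hboth : dist u x ≤ r + ε / 2 ∧ dist v x ≤ r + ε / 2 := by
      -- use triangle inequality with dist u v < ε/2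
        rcases hgc with h1 | h1
        · have h2 := hgpos u h1
          have h3 : dist v x ≤ dist u v + dist u x := by
            have := dist_triangle v u x
            have hc : dist v u = dist u v := dist_comm v u
            linarith
          exact ⟨by linarith, by linarith⟩
        · have h2 := hgpos v h1
          have h3 : dist u x ≤ dist u v + dist v x := dist_triangle u v x
          exact ⟨by linarith, by linarith⟩
      have hψu : ψ u = 0 := hψA u (by simp only [hA, Metric.mem_closedBall]; exact hboth.1)
      have hψv : ψ v = 0 := hψA v (by simp only [hA, Metric.mem_closedBall]; exact hboth.2)
      have hku : k u = 0 := by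
        by_contra hne
        have hp : 0 < k u := lt_of_le_of_ne (hknn u) (Ne.symm hne)
        exact hK1 u (by linarith [hboth.1]) (by linarith [hkpos u hp])
      have hkv : k v = 0 := by
        by_contra hne
        have hp : 0 < k v := lt_of_le_of_ne (hknn v) (Ne.symm hne)
        exact hK1 v (by linarith [hboth.2]) (by linarith [hkpos v hp])
      have h1 := hgLip u v
      simp only [hf, hψu, hψv, hku, hkv]
      linarith
    · by_cases hkc : 0 < k u ∨ 0 < k v
      · -- near y : both points in B
        have hboth : dist u y ≤ D - r + ε / 2 ∧ dist v y ≤ D - r + ε / 2 := by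
          rcases hkc with h1 | h1
          · have h2 := hkpos u h1
            have h3 : dist v y ≤ dist u v + dist u y := by
              have := dist_triangle v u y
              have hc : dist v u = dist u v := dist_comm v u
              linarith
            exact ⟨by linarith, by linarith⟩
          · have h2 := hkpos v h1
            have h3 : dist u y ≤ dist u v + dist v y := dist_triangle u v y
            exact ⟨by linarith, by linarith⟩
        have hψu : ψ u = 1 := hψB u hboth.1
        have hψv : ψ v = 1 := hψB v hboth.2
        push_neg at hgc
        have hgu : g u = 0 := le_antisymm hgc.1 (hgnn u)
        have hgv : g v = 0 := le_antisymm hgc.2 (hgnn v)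
        have h1 := hkLip v u
        have hc : dist v u = dist u v := dist_comm v u
        simp only [hf, hψu, hψv, hgu, hgv]
        linarith
      · -- transition zone : g and k vanish at both points
        push_neg at hgc
        push_neg at hkc
        have hgu : g u = 0 := le_antisymm hgc.1 (hgnn u)
        have hgv : g v = 0 := le_antisymm hgc.2 (hgnn v)
        have hku : k u = 0 := le_antisymm hkc.1 (hknn u)
        have hkv : k v = 0 := le_antisymm hkc.2 (hknn v)
        have h1 := hψd v u
        have hc : dist v u = dist u v := dist_comm v u
        simp only [hf, hgu, hgv, hku, hkv]
        linarith
  linarith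

/-- If `m_{x,y}` is a Δ-point then enlarged balls around `x` and `y` with radii summing
to `d(x,y) + 2ε` intersect; for compact `M`, the corresponding spheres intersect. -/
theorem localDelta_balls_intersect {M : Type*} [MetricSpace M] [CompleteSpace M]
    (x y : M) (hxy : x ≠ y) (h : LocalDeltaCondition x y) :
    (∀ r : ℝ, 0 < r → r < dist x y → ∀ ε : ℝ, 0 < ε →
      (Metric.closedBall x (r + ε) ∩ Metric.closedBall y (dist x y - r + ε)).Nonempty) ∧
    (CompactSpace M → ∀ r : ℝ, 0 < r → r < dist x y →
      ∃ z : M, dist z x = r ∧ dist z y = dist x y - r) := by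
  constructor
  · intro r hr hrd ε hε
    obtain ⟨z, hz1, hz2⟩ := localDelta_key x y h r ε hr hrd hε
    exact ⟨z, Metric.mem_closedBall.mpr hz1, Metric.mem_closedBall.mpr hz2⟩
  · intro hcomp r hr hrd
    set φ : M → ℝ := fun z => max (dist z x - r) (dist z y - (dist x y - r)) with hφ
    have hcont : Continuous φ := by
      apply Continuous.max
      · exact (Continuous.dist continuous_id continuous_const).sub continuous_const
      · exact (Continuous.dist continuous_id continuous_const).sub continuous_const
    obtain ⟨z, _, hzmin⟩ :=
      isCompact_univ.exists_isMinOn ⟨x, Set.mem_univ x⟩ hcont.continuousOn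
    have hφz : φ z ≤ 0 := by
      by_contra hpos
      push_neg at hpos
      obtain ⟨w, hw1, hw2⟩ := localDelta_key x y h r (φ z / 2) hr hrd (by linarith)
      have hzw : φ z ≤ φ w := hzmin (Set.mem_univ w)
      have hφw : φ w ≤ φ z / 2 := max_le (by linarith) (by linarith)
      linarith
    have h1 : dist z x ≤ r := by
      have := le_max_left (dist z x - r) (dist z y - (dist x y - r))
      have h2 : dist z x - r ≤ φ z := this
      linarith
    have h2 : dist z y ≤ dist x y - r := by
      have := le_max_right (dist z x - r) (dist z y - (dist x y - r))
      have h3 : dist z y - (dist x y - r) ≤ φ z := this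
      linarith
    have htri : dist x y ≤ dist z x + dist z y := by
      have := dist_triangle x z y
      have hc : dist x z = dist z x := dist_comm x z
      linarith
    exact ⟨z, by linarith, by linarith⟩
end

section
/- Let M be a complete metric space. The following are equivalent: (i) for every pair of distinct points x, y ∈ M and every δ > 0, the closed balls B(x, (1 + δ)·d(x, y)/2) and B(y, (1 + δ)·d(x, y)/2) have nonempty intersection (i.e. M is a length space); (ii) every pair of distinct points of M satisfies the local Δ-condition. -/
open Finset Classical in
/-- If the two closed balls of radius `r` around `x` and `y` are disjoint, then any chain
from `x` to `y` with steps at most `ε` has total length more than `2 * (r - ε)`. -/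
lemma chain_length_lb {M : Type*} [MetricSpace M] {x y : M} {r ε : ℝ}
    (hempty : ∀ z : M, ¬(dist z x ≤ r ∧ dist z y ≤ r)) (hd : 0 < dist x y)
    (n : ℕ) (u : ℕ → M) (hu0 : u 0 = x) (hun : u n = y)
    (hstep : ∀ i < n, dist (u i) (u (i+1)) ≤ ε) :
    2 * (r - ε) < ∑ i ∈ Finset.range n, dist (u i) (u (i+1)) := by
  set L : ℝ := ∑ i ∈ Finset.range n, dist (u i) (u (i+1)) with hL
  by_contra hcon
  push_neg at hcon
  set ℓ : ℕ → ℝ := fun k => ∑ i ∈ Finset.range k, dist (u i) (u (i+1)) with hℓ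
  have hdL : dist x y ≤ L := by
    rw [← hu0, ← hun]; exact dist_le_range_sum_dist u n
  have hLpos : 0 < L := lt_of_lt_of_le hd hdL
  set P : ℕ → Prop := fun k => ℓ k ≤ L / 2 with hP
  set k := Nat.findGreatest P n with hk
  have hP0 : P 0 := by simp [hP, hℓ]; linarith
  have hPk : P k := Nat.findGreatest_spec (Nat.zero_le n) hP0
  have hkn : k ≤ n := Nat.findGreatest_le n
  have hklt : k < n := by
    rcases lt_or_eq_of_le hkn with h | h
    · exact h
    · exfalso
      have : ℓ n ≤ L / 2 := h ▸ hPk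
      have : L ≤ L / 2 := this
      linarith
  have hnotP : ¬ P (k + 1) :=
    Nat.findGreatest_is_greatest (Nat.lt_succ_self k) hklt
  have hℓsucc : ℓ (k+1) = ℓ k + dist (u k) (u (k+1)) := Finset.sum_range_succ _ k
  have hℓk1 : L / 2 < ℓ (k+1) := by
    by_contra hc; push_neg at hc; exact hnotP hc
  -- distance from x to u k
  have h1 : dist x (u k) ≤ ℓ k := by
    rw [← hu0]; exact dist_le_range_sum_dist u k
  -- distance from u k to y
  have h2 : dist (u k) y ≤ L - ℓ k := by
    rw [← hun]
    have key : dist (u k) (u n) ≤ ∑ i ∈ Finset.range (n - k), dist (u (k+i)) (u (k+i+1)) := by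
      have h := dist_le_range_sum_dist (fun i => u (k + i)) (n - k)
      simp only [Nat.add_zero, Nat.add_sub_cancel' hkn] at h
      exact h
    have hsum : ℓ k + ∑ i ∈ Finset.range (n - k), dist (u (k+i)) (u (k+i+1)) = L := by
      rw [hℓ, hL]
      have hnk : k + (n - k) = n := Nat.add_sub_cancel' hkn
      calc ∑ i ∈ Finset.range k, dist (u i) (u (i+1))
            + ∑ i ∈ Finset.range (n - k), dist (u (k+i)) (u (k+i+1))
          = ∑ i ∈ Finset.range (k + (n - k)), dist (u i) (u (i+1)) := by
            rw [Finset.sum_range_add]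
        _ = ∑ i ∈ Finset.range n, dist (u i) (u (i+1)) := by rw [hnk]
    linarith [key]
  have hstepk : dist (u k) (u (k+1)) ≤ ε := hstep k hklt
  have hx : dist (u k) x ≤ r := by
    rw [dist_comm]
    have : ℓ k ≤ L / 2 := hPk
    linarith
  have hy : dist (u k) y ≤ r := by
    have : L - ℓ k < L / 2 + ε := by linarith
    linarith
  exact hempty (u k) ⟨hx, hy⟩

/-- Midpoint splitting iteration: if approximate midpoints with parameter `η` always exist,
a pair with slope above `θ * (1+η)^N` yields a pair at distance shrunk by `((1+η)/2)^N`
with slope above `θ`. -/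
lemma delta_step {M : Type*} [MetricSpace M] (f : M → ℝ) (θ η : ℝ) (hθ : 0 < θ) (hη : 0 < η)
    (hmid : ∀ a b : M, a ≠ b →
      ∃ z : M, dist z a ≤ (1 + η) * dist a b / 2 ∧ dist z b ≤ (1 + η) * dist a b / 2) :
    ∀ (N : ℕ) (a b : M), f a - f b > θ * (1 + η) ^ N * dist a b →
      ∃ u v : M, dist u v ≤ ((1 + η) / 2) ^ N * dist a b ∧ f u - f v > θ * dist u v := by
  intro N
  induction N with
  | zero =>
    intro a b h
    exact ⟨a, b, by simp, by simpa using h⟩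
  | succ N ih =>
    intro a b h
    rcases eq_or_ne a b with rfl | hab
    · simp at h
    obtain ⟨z, hz1, hz2⟩ := hmid a b hab
    have hc : 0 ≤ θ * (1 + η) ^ N := by positivity
    have hsplit : f a - f z > θ * (1 + η) ^ N * dist a z ∨
        f z - f b > θ * (1 + η) ^ N * dist z b := by
      by_contra hcon
      push_neg at hcon
      obtain ⟨h1, h2⟩ := hcon
      have hsum : dist a z + dist z b ≤ (1 + η) * dist a b := by
        rw [dist_comm a z]; linarith
      have : θ * (1 + η) ^ N * (dist a z + dist z b)
          ≤ θ * (1 + η) ^ N * ((1 + η) * dist a b) :=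
        mul_le_mul_of_nonneg_left hsum hc
      have hp : θ * (1 + η) ^ N * ((1 + η) * dist a b)
          = θ * (1 + η) ^ (N + 1) * dist a b := by ring
      nlinarith [h]
    have hfac : (0:ℝ) ≤ ((1 + η) / 2) ^ N := by positivity
    rcases hsplit with hs | hs
    · obtain ⟨u, v, huv, hgt⟩ := ih a z hs
      refine ⟨u, v, ?_, hgt⟩
      have : dist a z ≤ (1 + η) * dist a b / 2 := by rw [dist_comm a z]; exact hz1
      calc dist u v ≤ ((1 + η) / 2) ^ N * dist a z := huv
        _ ≤ ((1 + η) / 2) ^ N * ((1 + η) * dist a b / 2) :=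
            mul_le_mul_of_nonneg_left this hfac
        _ = ((1 + η) / 2) ^ (N + 1) * dist a b := by ring
    · obtain ⟨u, v, huv, hgt⟩ := ih z b hs
      refine ⟨u, v, ?_, hgt⟩
      calc dist u v ≤ ((1 + η) / 2) ^ N * dist z b := huv
        _ ≤ ((1 + η) / 2) ^ N * ((1 + η) * dist a b / 2) :=
            mul_le_mul_of_nonneg_left hz2 hfac
        _ = ((1 + η) / 2) ^ (N + 1) * dist a b := by ring

/-- A complete metric space is a length space if and only if every pair of distinct
points satisfies the local Δ-condition. -/
theorem length_iff_all_molecules_delta {M : Type*} [MetricSpace M] [CompleteSpace M] :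
    (∀ x y : M, x ≠ y → ∀ δ : ℝ, 0 < δ →
      (Metric.closedBall x ((1 + δ) * dist x y / 2) ∩
        Metric.closedBall y ((1 + δ) * dist x y / 2)).Nonempty)
    ↔ (∀ x y : M, x ≠ y → LocalDeltaCondition x y) := by
  constructor
  · intro hL
    intro x y hxy f hf θ hθ0 hθ1 hgap ε hε
    have hd : 0 < dist x y := dist_pos.2 hxy
    -- choose N with (3/4)^N * dist x y < ε
    obtain ⟨N, hN⟩ : ∃ N : ℕ, (3/4 : ℝ) ^ N < ε / dist x y :=
      exists_pow_lt_of_lt_one (by positivity) (by norm_num)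
    have hN' : (3/4 : ℝ) ^ N * dist x y < ε := by
      rw [← lt_div_iff₀ hd]; exact hN
    -- choose η
    have hcont : Filter.Tendsto (fun η : ℝ => θ * (1 + η) ^ N * dist x y)
        (nhds 0) (nhds (θ * dist x y)) := by
      have : Continuous (fun η : ℝ => θ * (1 + η) ^ N * dist x y) := by continuity
      have h := this.tendsto 0
      simpa using h
    have hev1 : ∀ᶠ η : ℝ in nhds 0, θ * (1 + η) ^ N * dist x y < f x - f y :=
      hcont.eventually_lt_const hgap
    have hev2 : ∀ᶠ η : ℝ in nhds 0, η < 1/2 :=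
      eventually_nhds_iff.mpr ⟨Set.Iio (1/2), fun z hz => hz, isOpen_Iio, by norm_num⟩
    obtain ⟨η, ⟨hηlt, hηhalf⟩, hη0⟩ :=
      (((hev1.and hev2).filter_mono nhdsWithin_le_nhds).and
        (eventually_mem_nhdsWithin (a := (0:ℝ)) (s := Set.Ioi 0))).exists
    have hη0' : (0:ℝ) < η := hη0
    -- midpoints
    have hmid : ∀ a b : M, a ≠ b →
        ∃ z : M, dist z a ≤ (1 + η) * dist a b / 2 ∧ dist z b ≤ (1 + η) * dist a b / 2 := by
      intro a b hab
      obtain ⟨z, hz1, hz2⟩ := hL a b hab η hη0'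
      exact ⟨z, Metric.mem_closedBall.1 hz1, Metric.mem_closedBall.1 hz2⟩
    obtain ⟨u, v, huv, hgt⟩ := delta_step f θ η hθ0 hη0' hmid N x y hηlt
    refine ⟨u, v, ?_, ?_, hgt⟩
    · rcases eq_or_lt_of_le (dist_nonneg (x := u) (y := v)) with h0 | h0
      · exfalso
        rw [← h0] at hgt
        have : u = v := dist_eq_zero.1 h0.symm
        subst this
        simp at hgt
      · exact h0
    · have hle : ((1 + η) / 2 : ℝ) ≤ 3/4 := by linarith
      have : ((1 + η) / 2 : ℝ) ^ N ≤ (3/4) ^ N :=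
        pow_le_pow_left₀ (by positivity) hle N
      calc dist u v ≤ ((1 + η) / 2) ^ N * dist x y := huv
        _ ≤ (3/4) ^ N * dist x y := mul_le_mul_of_nonneg_right this dist_nonneg
        _ < ε := hN'
  · intro hR
    intro x y hxy δ hδ
    by_contra hne
    have hd : 0 < dist x y := dist_pos.2 hxy
    set d : ℝ := dist x y with hddef
    set r : ℝ := (1 + δ) * d / 2 with hrdef
    set ε : ℝ := δ * d / 4 with hεdef
    set θ : ℝ := min (δ/8) (1/2) with hθdef
    have hεpos : 0 < ε := by rw [hεdef]; positivity
    have hθ0 : 0 < θ := lt_min (by positivity) one_half_pos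
    have hθ1 : θ < 1 := lt_of_le_of_lt (min_le_right _ _) (by norm_num)
    have hθδ : θ ≤ δ/8 := min_le_left _ _
    have hempty : ∀ z : M, ¬(dist z x ≤ r ∧ dist z y ≤ r) := by
      intro z hz
      exact hne ⟨z, Metric.mem_closedBall.2 hz.1, Metric.mem_closedBall.2 hz.2⟩
    -- the witness function
    set S : M → Set ℝ := fun z => insert (0:ℝ)
      {t | ∃ n : ℕ, ∃ u : ℕ → M, u 0 = x ∧ u n = z ∧
        (∀ i < n, dist (u i) (u (i+1)) ≤ ε) ∧
        t = ε - θ * ∑ i ∈ Finset.range n, dist (u i) (u (i+1))} with hSdef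
    set f : M → ℝ := fun z => sSup (S z) with hfdef
    have hub : ∀ z : M, ∀ t ∈ S z, t ≤ ε := by
      intro z t ht
      rcases ht with h0 | ⟨n, u, _, _, _, hteq⟩
      · rw [h0]; exact hεpos.le
      · have hsum : 0 ≤ ∑ i ∈ Finset.range n, dist (u i) (u (i+1)) :=
          Finset.sum_nonneg fun i _ => dist_nonneg
        have : 0 ≤ θ * ∑ i ∈ Finset.range n, dist (u i) (u (i+1)) :=
          mul_nonneg hθ0.le hsum
        rw [hteq]; linarith
    have hbdd : ∀ z : M, BddAbove (S z) := fun z => ⟨ε, hub z⟩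
    have hne0 : ∀ z : M, (0:ℝ) ∈ S z := fun z => Set.mem_insert _ _
    have hf0 : ∀ z : M, 0 ≤ f z := fun z => le_csSup (hbdd z) (hne0 z)
    have hfle : ∀ z : M, f z ≤ ε := fun z => csSup_le ⟨0, hne0 z⟩ (hub z)
    have hfx : ε ≤ f x := by
      apply le_csSup (hbdd x)
      apply Set.mem_insert_of_mem
      exact ⟨0, fun _ => x, rfl, rfl, by simp, by simp⟩
    -- step inequality
    have hstepf : ∀ u v : M, dist u v ≤ ε → f u ≤ f v + θ * dist u v := by
      intro u v huv
      apply csSup_le ⟨0, hne0 u⟩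
      intro t ht
      rcases ht with h0 | ⟨n, w, hw0, hwn, hws, hteq⟩
      · rw [h0]
        have := mul_nonneg hθ0.le (dist_nonneg (x := u) (y := v))
        linarith [hf0 v]
      · set w' : ℕ → M := fun i => if i ≤ n then w i else v with hw'def
        have hw'0 : w' 0 = x := by
          rw [hw'def]; simp only [Nat.zero_le, if_pos]; exact hw0
        have hw'n : w' (n+1) = v := by
          rw [hw'def]; simp only []; rw [if_neg (Nat.not_succ_le_self n)]
        have hws' : ∀ i < n + 1, dist (w' i) (w' (i+1)) ≤ ε := by
          intro i hi
          rcases Nat.lt_succ_iff_lt_or_eq.1 hi with h | h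
          · have e1 : w' i = w i := if_pos (le_of_lt h)
            have e2 : w' (i+1) = w (i+1) := if_pos (Nat.succ_le_of_lt h)
            rw [e1, e2]; exact hws i h
          · subst h
            have e1 : w' i = w i := if_pos le_rfl
            rw [e1, hw'n, hwn]; exact huv
        have hsum : ∑ i ∈ Finset.range (n+1), dist (w' i) (w' (i+1))
            = (∑ i ∈ Finset.range n, dist (w i) (w (i+1))) + dist u v := by
          rw [Finset.sum_range_succ]
          congr 1
          · apply Finset.sum_congr rfl
            intro i hi
            have h := Finset.mem_range.1 hi
            have e1 : w' i = w i := if_pos (le_of_lt h)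
            have e2 : w' (i+1) = w (i+1) := if_pos (Nat.succ_le_of_lt h)
            rw [e1, e2]
          · have e1 : w' n = w n := if_pos le_rfl
            rw [e1, hw'n, hwn]
        have hmem : ε - θ * ∑ i ∈ Finset.range (n+1), dist (w' i) (w' (i+1)) ∈ S v :=
          Set.mem_insert_of_mem _ ⟨n+1, w', hw'0, hw'n, hws', rfl⟩
        have hle := le_csSup (hbdd v) hmem
        rw [hsum] at hle
        rw [hteq]
        linarith
    -- f is 1-Lipschitz
    have haux : ∀ a b : M, f a - f b ≤ dist a b := by
      intro a b
      rcases le_or_gt (dist a b) ε with h | h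
      · have h1 := hstepf a b h
        have h2 : θ * dist a b ≤ dist a b :=
          mul_le_of_le_one_left dist_nonneg hθ1.le
        linarith
      · linarith [hfle a, hf0 b]
    have hlip : LipschitzWith 1 f := by
      apply LipschitzWith.of_dist_le_mul
      intro a b
      rw [NNReal.coe_one, one_mul, Real.dist_eq, abs_sub_le_iff]
      exact ⟨haux a b, by rw [dist_comm]; exact haux b a⟩
    -- bound on f y
    have hB : 2 * (r - ε) = (1 + δ/2) * d := by rw [hrdef, hεdef]; ring
    have hfy : f y ≤ max 0 (ε - θ * ((1 + δ/2) * d)) := by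
      apply csSup_le ⟨0, hne0 y⟩
      intro t ht
      rcases ht with h0 | ⟨n, u, hu0, hun, hus, hteq⟩
      · rw [h0]; exact le_max_left _ _
      · have hlb := chain_length_lb hempty hd n u hu0 hun hus
        rw [hB] at hlb
        have : θ * ((1 + δ/2) * d) ≤ θ * ∑ i ∈ Finset.range n, dist (u i) (u (i+1)) :=
          mul_le_mul_of_nonneg_left hlb.le hθ0.le
        rw [hteq]
        have := le_max_right (0:ℝ) (ε - θ * ((1 + δ/2) * d))
        linarith
    -- the gap
    have hθd : θ * d < ε := by
      have : θ * d ≤ δ/8 * d := mul_le_mul_of_nonneg_right hθδ hd.le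
      rw [hεdef]; nlinarith
    have hgap : f x - f y > θ * dist x y := by
      rw [← hddef]
      rcases le_or_gt (ε - θ * ((1 + δ/2) * d)) 0 with h | h
      · rw [max_eq_left h] at hfy
        linarith
      · rw [max_eq_right h.le] at hfy
        have : θ * d < θ * ((1 + δ/2) * d) := by nlinarith
        linarith
    obtain ⟨u, v, h1, h2, h3⟩ := hR x y hxy f hlip θ hθ0 hθ1 hgap ε hεpos
    have := hstepf u v h2.le
    linarith
end

section
/- Let X be a strictly convex real Banach space and let M be a compact subset of X, regarded as a metric space with the metric induced by the norm. Let x ≠ y ∈ M. The following are equivalent: (1) the pair (x, y) satisfies the local Δ-condition; (2) for every r with 0 < r < ‖x − y‖ there exists z ∈ M with ‖z − x‖ = r and ‖z − y‖ = ‖x − y‖ − r; (3) the segment [x, y] = {(1 − t)·x + t·y : t ∈ [0, 1]} is contained in M. -/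
namespace DeltaAux

variable {N : Type*} [MetricSpace N]

/-- local step cost -/
noncomputable def cost (θ ε : ℝ) (u v : N) : ℝ := if dist u v < ε then θ * dist u v else dist u v

def chainSums (θ ε : ℝ) (u v : N) : Set ℝ :=
  { s | ∃ n : ℕ, ∃ w : ℕ → N, w 0 = u ∧ w n = v ∧
      s = ∑ i ∈ Finset.range n, cost θ ε (w i) (w (i+1)) }

noncomputable def rho (θ ε : ℝ) (u v : N) : ℝ := sInf (chainSums θ ε u v)

variable {θ ε : ℝ}

lemma cost_nonneg (hθ : 0 ≤ θ) (u v : N) : 0 ≤ cost θ ε u v := by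
  unfold cost; split <;> positivity

lemma cost_le_dist (hθ : θ ≤ 1) (u v : N) : cost θ ε u v ≤ dist u v := by
  unfold cost; split
  · nlinarith [dist_nonneg (x := u) (y := v)]
  · exact le_refl _

lemma cost_comm (u v : N) : cost θ ε u v = cost θ ε v u := by
  unfold cost; rw [dist_comm]

lemma chainSums_nonempty (u v : N) : (chainSums θ ε u v).Nonempty :=
  ⟨cost θ ε u v, 1, fun i => if i = 0 then u else v, by simp, by simp, by simp⟩

lemma chainSums_nonneg (hθ : 0 ≤ θ) {u v : N} {s : ℝ} (hs : s ∈ chainSums θ ε u v) : 0 ≤ s := by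
  obtain ⟨n, w, -, -, rfl⟩ := hs
  exact Finset.sum_nonneg fun i _ => cost_nonneg hθ _ _

lemma chainSums_bddBelow (hθ : 0 ≤ θ) (u v : N) : BddBelow (chainSums θ ε u v) :=
  ⟨0, fun s hs => chainSums_nonneg hθ hs⟩

lemma rho_nonneg (hθ : 0 ≤ θ) (u v : N) : 0 ≤ rho θ ε u v :=
  le_csInf (chainSums_nonempty u v) fun s hs => chainSums_nonneg hθ hs

lemma rho_self (hθ : 0 ≤ θ) (u : N) : rho θ ε u u = 0 := by
  refine le_antisymm (csInf_le (chainSums_bddBelow hθ u u) ?_) (rho_nonneg hθ u u)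
  exact ⟨0, fun _ => u, rfl, rfl, by simp⟩

lemma rho_le_cost_add (hθ : 0 ≤ θ) (u v t : N) :
    rho θ ε u t ≤ cost θ ε u v + rho θ ε v t := by
  have h : ∀ s ∈ chainSums θ ε v t, rho θ ε u t ≤ cost θ ε u v + s := by
    rintro s ⟨n, w, h0, hn, rfl⟩
    refine csInf_le (chainSums_bddBelow hθ u t) ?_
    refine ⟨n + 1, fun i => if i = 0 then u else w (i - 1), by simp, by simp [hn], ?_⟩
    rw [Finset.sum_range_succ']
    simp only [Nat.succ_ne_zero, if_false, Nat.add_sub_cancel, if_pos rfl]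
    rw [add_comm]
    congr 1
    · simp [h0]
  have h2 : rho θ ε u t - cost θ ε u v ≤ rho θ ε v t :=
    le_csInf (chainSums_nonempty v t) fun s hs => by linarith [h s hs]
  linarith


lemma theta_dist_le_cost (hθ1 : θ ≤ 1) (u v : N) : θ * dist u v ≤ cost θ ε u v := by
  unfold cost; split
  · exact le_refl _
  · nlinarith [dist_nonneg (x := u) (y := v)]

lemma rho_lipschitz (hθ0 : 0 ≤ θ) (hθ1 : θ ≤ 1) (t : N) :
    LipschitzWith 1 (fun u : N => rho θ ε u t) := by
  apply LipschitzWith.of_dist_le_mul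
  intro u v
  rw [Real.dist_eq, NNReal.coe_one, one_mul, abs_sub_le_iff]
  have h1 := rho_le_cost_add (ε := ε) hθ0 u v t
  have h2 := rho_le_cost_add (ε := ε) hθ0 v u t
  have hc := cost_le_dist (ε := ε) hθ1 u v
  have hc2 := cost_le_dist (ε := ε) hθ1 v u
  rw [dist_comm v u] at hc2
  constructor <;> linarith

lemma chain_extract {x y : N} {γ r : ℝ} (hθ0 : 0 < θ) (hθ1 : θ < 1) (hε : 0 < ε)
    (hγε : γ < (1 - θ) * ε)
    (hr0 : 0 < r) (hrd : r < dist x y)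
    {s : ℝ} (hs : s ∈ chainSums θ ε x y) (hsle : s ≤ θ * dist x y + γ) :
    ∃ z : N, r ≤ dist x z ∧ dist x z < r + ε ∧ dist z y ≤ dist x y - r + γ / θ := by
  classical
  obtain ⟨n, w, h0, hn, rfl⟩ := hs
  set D := ∑ i ∈ Finset.range n, dist (w i) (w (i+1)) with hD
  have hDge : dist x y ≤ D := by rw [← h0, ← hn]; exact dist_le_range_sum_dist w n
  have hcost_ge : θ * D ≤ ∑ i ∈ Finset.range n, cost θ ε (w i) (w (i+1)) := by
    rw [hD, Finset.mul_sum]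
    exact Finset.sum_le_sum fun i _ => theta_dist_le_cost hθ1.le _ _
  -- all steps are short
  have hshort : ∀ j ∈ Finset.range n, dist (w j) (w (j+1)) < ε := by
    intro j hj
    by_contra hlong
    push_neg at hlong
    have hcj : cost θ ε (w j) (w (j+1)) = dist (w j) (w (j+1)) := by
      unfold cost; rw [if_neg (not_lt.mpr hlong)]
    have hsplit := Finset.add_sum_erase (Finset.range n)
      (fun i => cost θ ε (w i) (w (i+1))) hj
    have hsplitd := Finset.add_sum_erase (Finset.range n)
      (fun i => dist (w i) (w (i+1))) hj
    have herase : θ * (D - dist (w j) (w (j+1))) ≤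
        ∑ i ∈ (Finset.range n).erase j, cost θ ε (w i) (w (i+1)) := by
      have : ∑ i ∈ (Finset.range n).erase j, θ * dist (w i) (w (i+1)) ≤
          ∑ i ∈ (Finset.range n).erase j, cost θ ε (w i) (w (i+1)) :=
        Finset.sum_le_sum fun i _ => theta_dist_le_cost hθ1.le _ _
      rw [← Finset.mul_sum] at this
      have hd : ∑ i ∈ (Finset.range n).erase j, dist (w i) (w (i+1)) =
          D - dist (w j) (w (j+1)) := by
        rw [hD]; linarith [hsplitd]
      rwa [hd] at this
    have hlow : θ * dist x y + (1 - θ) * ε ≤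
        ∑ i ∈ Finset.range n, cost θ ε (w i) (w (i+1)) := by
      have := herase
      have h1 : (1 - θ) * ε ≤ (1 - θ) * dist (w j) (w (j+1)) := by nlinarith
      nlinarith [hsplit, hDge]
    linarith
  -- all costs are θ * dist
  have hcosteq : ∑ i ∈ Finset.range n, cost θ ε (w i) (w (i+1)) = θ * D := by
    rw [hD, Finset.mul_sum]
    refine Finset.sum_congr rfl fun i hi => ?_
    unfold cost; rw [if_pos (hshort i hi)]
  have hDle : D ≤ dist x y + γ / θ := by
    rw [hcosteq] at hsle
    have h1 : D ≤ (θ * dist x y + γ) / θ := (le_div_iff₀' hθ0).mpr hsle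
    calc D ≤ (θ * dist x y + γ) / θ := h1
    _ = dist x y + γ / θ := by rw [add_div, mul_div_cancel_left₀ _ hθ0.ne']
  -- find the first index reaching distance r from x
  have hpn : r ≤ dist x (w n) := by rw [hn]; exact hrd.le
  have hex : ∃ k, r ≤ dist x (w k) := ⟨n, hpn⟩
  let k := Nat.find hex
  have hk : r ≤ dist x (w k) := Nat.find_spec hex
  have hkn : k ≤ n := Nat.find_min' hex hpn
  have hk0 : k ≠ 0 := by
    intro h
    have := hk
    rw [h, h0, dist_self] at this
    linarith
  obtain ⟨m, hm⟩ : ∃ m, k = m + 1 := ⟨k - 1, (Nat.succ_pred_eq_of_pos (Nat.pos_of_ne_zero hk0)).symm⟩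
  have hmlt : dist x (w m) < r := by
    have := Nat.find_min hex (m := m) (by omega)
    push_neg at this
    exact this
  have hmn : m ∈ Finset.range n := Finset.mem_range.mpr (by omega)
  have hupper : dist x (w k) < r + ε := by
    calc dist x (w k) ≤ dist x (w m) + dist (w m) (w k) := dist_triangle _ _ _
    _ < r + ε := by
        rw [hm]
        exact add_lt_add hmlt (hshort m hmn)
  -- distance from w k to y
  have hxk : r ≤ ∑ i ∈ Finset.range k, dist (w i) (w (i+1)) := by
    calc r ≤ dist x (w k) := hk
    _ = dist (w 0) (w k) := by rw [h0]
    _ ≤ ∑ i ∈ Finset.range k, dist (w i) (w (i+1)) := dist_le_range_sum_dist w k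
  have htail : dist (w k) y ≤ D - ∑ i ∈ Finset.range k, dist (w i) (w (i+1)) := by
    have hsum2 : D = ∑ i ∈ Finset.range k, dist (w i) (w (i+1)) +
        ∑ i ∈ Finset.range (n - k), dist (w (k + i)) (w (k + i + 1)) := by
      have h1 := Finset.sum_Ico_consecutive (fun i => dist (w i) (w (i+1)))
        (Nat.zero_le k) hkn
      have h2 := Finset.sum_Ico_eq_sum_range (f := fun i => dist (w i) (w (i+1)))
        (m := k) (n := n)
      rw [hD, Finset.range_eq_Ico, ← h1, h2, ← Finset.range_eq_Ico]
    have : dist (w k) y ≤ ∑ i ∈ Finset.range (n - k), dist (w (k + i)) (w (k + i + 1)) := by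
      have h2 := dist_le_range_sum_dist (fun i => w (k + i)) (n - k)
      simp only [Nat.add_zero] at h2
      rw [Nat.add_sub_cancel' hkn, hn] at h2
      exact h2
    linarith [hsum2]
  exact ⟨w k, hk, hupper, by linarith⟩


lemma rho_le_of_delta {x y : N} (hDel : LocalDeltaCondition x y)
    (hθ0 : 0 < θ) (hθ1 : θ < 1) (hε : 0 < ε) :
    rho θ ε x y ≤ θ * dist x y := by
  by_contra hgt
  push_neg at hgt
  obtain ⟨u, v, huv0, huvε, hst⟩ := hDel (fun z => rho θ ε z y)
    (rho_lipschitz hθ0.le hθ1.le y) θ hθ0 hθ1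
    (by simpa [rho_self hθ0.le] using hgt) ε hε
  have h1 := rho_le_cost_add (ε := ε) hθ0.le u v y
  have hc : cost θ ε u v = θ * dist u v := if_pos huvε
  linarith

lemma delta_point_approx {x y : N} (hDel : LocalDeltaCondition x y) {r η : ℝ}
    (hr0 : 0 < r) (hrd : r < dist x y) (hη : 0 < η) :
    ∃ z : N, r ≤ dist x z ∧ dist x z < r + η ∧ dist z y ≤ dist x y - r + η := by
  have h2 : (0:ℝ) < 1/2 := by norm_num
  have hrho := rho_le_of_delta (θ := 1/2) (ε := η) hDel h2 (by norm_num) hη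
  have hlt : rho (1/2) η x y < (1/2) * dist x y + η/4 := lt_of_le_of_lt hrho (by linarith)
  obtain ⟨s, hs, hslt⟩ := exists_lt_of_csInf_lt (chainSums_nonempty x y) hlt
  obtain ⟨z, hz1, hz2, hz3⟩ := chain_extract (γ := η/4) h2 (by norm_num) hη
    (by linarith) hr0 hrd hs hslt.le
  refine ⟨z, hz1, hz2, ?_⟩
  have : (η/4) / (1/2) = η/2 := by ring
  rw [this] at hz3
  linarith

end DeltaAux

/-- For a compact subset `M` of a strictly convex Banach space and `x ≠ y` in `M`:
`m_{x,y}` is a Δ-point iff all intermediate spheres meet `M` iff `[x,y] ⊆ M`. -/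
theorem delta_point_iff_segment_compact {X : Type*} [NormedAddCommGroup X]
    [NormedSpace ℝ X] [CompleteSpace X]
    (hsc : ∀ u v : X, ‖u‖ = 1 → ‖v‖ = 1 → u ≠ v → ‖u + v‖ < 2)
    (M : Set X) (hM : IsCompact M)
    (x y : X) (hx : x ∈ M) (hy : y ∈ M) (hxy : x ≠ y) :
    (LocalDeltaCondition (⟨x, hx⟩ : M) (⟨y, hy⟩ : M) ↔
      (∀ r : ℝ, 0 < r → r < ‖x - y‖ →
        ∃ z ∈ M, ‖z - x‖ = r ∧ ‖z - y‖ = ‖x - y‖ - r)) ∧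
    ((∀ r : ℝ, 0 < r → r < ‖x - y‖ →
        ∃ z ∈ M, ‖z - x‖ = r ∧ ‖z - y‖ = ‖x - y‖ - r) ↔
      (∀ t : ℝ, 0 ≤ t → t ≤ 1 → (1 - t) • x + t • y ∈ M)) := by
  haveI : StrictConvexSpace ℝ X :=
    StrictConvexSpace.of_norm_add_ne_two fun u v hu hv huv => ne_of_lt (hsc u v hu hv huv)
  have hd0 : (0:ℝ) < ‖x - y‖ := by rwa [norm_sub_pos_iff]
  have hdm : dist (⟨x, hx⟩ : M) (⟨y, hy⟩ : M) = ‖x - y‖ := by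
    rw [Subtype.dist_eq, dist_eq_norm]
  -- (3) → (2)
  have h32 : (∀ t : ℝ, 0 ≤ t → t ≤ 1 → (1 - t) • x + t • y ∈ M) →
      ∀ r : ℝ, 0 < r → r < ‖x - y‖ →
        ∃ z ∈ M, ‖z - x‖ = r ∧ ‖z - y‖ = ‖x - y‖ - r := by
    intro h3 r hr0 hrd
    set t := r / ‖x - y‖ with ht
    have ht0 : 0 ≤ t := by positivity
    have ht1 : t ≤ 1 := by rw [ht, div_le_one hd0]; linarith
    refine ⟨(1 - t) • x + t • y, h3 t ht0 ht1, ?_, ?_⟩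
    · have he : (1 - t) • x + t • y - x = t • (y - x) := by module
      rw [he, norm_smul, Real.norm_of_nonneg ht0, norm_sub_rev, ht,
        div_mul_cancel₀ _ hd0.ne']
    · have he : (1 - t) • x + t • y - y = (1 - t) • (x - y) := by module
      rw [he, norm_smul, Real.norm_of_nonneg (by linarith), sub_mul, one_mul, ht,
        div_mul_cancel₀ _ hd0.ne']
  -- (2) → (3)
  have h23 : (∀ r : ℝ, 0 < r → r < ‖x - y‖ →
        ∃ z ∈ M, ‖z - x‖ = r ∧ ‖z - y‖ = ‖x - y‖ - r) →
      ∀ t : ℝ, 0 ≤ t → t ≤ 1 → (1 - t) • x + t • y ∈ M := by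
    intro h2 t ht0 ht1
    rcases eq_or_lt_of_le ht0 with h|h
    · simpa [← h] using hx
    rcases eq_or_lt_of_le ht1 with h1|h1
    · simp only [h1]
      simpa using hy
    obtain ⟨z, hzM, hz1, hz2⟩ := h2 (t * ‖x - y‖) (by positivity) (by nlinarith)
    have hzx : dist x z = t * dist x y := by
      rw [dist_eq_norm, dist_eq_norm, norm_sub_rev, hz1]
    have hzy : dist z y = (1 - t) * dist x y := by
      rw [dist_eq_norm, dist_eq_norm, hz2]; ring
    have hz := eq_lineMap_of_dist_eq_mul_of_dist_eq_mul hzx hzy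
    rw [AffineMap.lineMap_apply_module] at hz
    rwa [← hz]
  -- (3) → (1)
  have h31 : (∀ t : ℝ, 0 ≤ t → t ≤ 1 → (1 - t) • x + t • y ∈ M) →
      LocalDeltaCondition (⟨x, hx⟩ : M) (⟨y, hy⟩ : M) := by
    intro h3 f hf θ hθ0 hθ1 hfxy ε hε
    obtain ⟨n, hn⟩ := exists_nat_gt (‖x - y‖ / ε)
    have hn0 : (0:ℝ) < n := lt_trans (by positivity) hn
    have hstep : ‖x - y‖ / n < ε := by
      rw [div_lt_iff₀ hn0]
      rw [div_lt_iff₀ hε] at hn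
      linarith [hn]
    set τ : ℕ → ℝ := fun i => min ((i:ℝ)/n) 1 with hτ
    have hτ0 : ∀ i, 0 ≤ τ i := fun i => le_min (by positivity) zero_le_one
    have hτ1 : ∀ i, τ i ≤ 1 := fun i => min_le_right _ _
    set p : ℕ → M := fun i => ⟨(1 - τ i) • x + τ i • y, h3 (τ i) (hτ0 i) (hτ1 i)⟩ with hp
    have hτeq : ∀ i : ℕ, i ≤ n → τ i = (i:ℝ)/n := by
      intro i hi
      rw [hτ]
      exact min_eq_left (by rw [div_le_one hn0]; exact_mod_cast hi)
    have hp0 : p 0 = (⟨x, hx⟩ : M) := by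
      apply Subtype.ext
      simp [hp, hτ]
    have hpn : p n = (⟨y, hy⟩ : M) := by
      apply Subtype.ext
      have : τ n = 1 := by rw [hτeq n le_rfl, div_self hn0.ne']
      simp [hp, this]
    have hpdist : ∀ i ∈ Finset.range n, dist (p i) (p (i+1)) = ‖x - y‖ / n := by
      intro i hi
      rw [Finset.mem_range] at hi
      rw [Subtype.dist_eq, dist_eq_norm]
      have he : ((1 - τ i) • x + τ i • y) - ((1 - τ (i+1)) • x + τ (i+1) • y)
          = (τ (i+1) - τ i) • (x - y) := by module
      rw [hp]
      simp only
      rw [he, norm_smul, Real.norm_of_nonneg, hτeq i hi.le, hτeq (i+1) hi,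
        div_sub_div_same]
      · push_cast
        ring_nf
      · rw [sub_nonneg, hτeq i hi.le, hτeq (i+1) hi]
        gcongr
        push_cast; linarith
    by_contra hcon
    push_neg at hcon
    have hle : ∀ i ∈ Finset.range n, f (p i) - f (p (i+1)) ≤ θ * (‖x - y‖ / n) := by
      intro i hi
      have hdist := hpdist i hi
      rcases le_or_gt (dist (p i) (p (i+1))) 0 with h0 | h0
      · -- impossible since dist = ‖x-y‖/n > 0
        exfalso
        rw [hdist] at h0
        have : (0:ℝ) < ‖x - y‖ / n := by positivity
        linarith
      · have := hcon (p i) (p (i+1)) h0 (by rw [hdist]; exact hstep)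
        rwa [hdist] at this
    have hsum := Finset.sum_le_sum hle
    rw [Finset.sum_range_sub' (fun i => f (p i)), hp0, hpn] at hsum
    rw [Finset.sum_const, Finset.card_range, nsmul_eq_mul] at hsum
    have hnn : (n:ℝ) * (θ * (‖x - y‖ / n)) = θ * ‖x - y‖ := by
      field_simp
    rw [hnn] at hsum
    rw [hdm] at hfxy
    linarith
  -- (1) → (2)
  have h12 : LocalDeltaCondition (⟨x, hx⟩ : M) (⟨y, hy⟩ : M) →
      ∀ r : ℝ, 0 < r → r < ‖x - y‖ →
        ∃ z ∈ M, ‖z - x‖ = r ∧ ‖z - y‖ = ‖x - y‖ - r := by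
    intro h1 r hr0 hrd
    set K : ℕ → Set X := fun n =>
      ((M ∩ {z | r ≤ ‖z - x‖}) ∩ {z | ‖z - x‖ ≤ r + 1/(n+1)}) ∩
        {z | ‖z - y‖ ≤ ‖x - y‖ - r + 1/(n+1)} with hK
    have hmono : ∀ n : ℕ, (1:ℝ)/(n+1+1) ≤ 1/(n+1) := by
      intro n
      exact one_div_le_one_div_of_le (by positivity) (by push_cast; linarith)
    have hKsub : ∀ n, K (n+1) ⊆ K n := by
      rintro n z ⟨⟨⟨hzM, hz1⟩, hz2⟩, hz3⟩
      simp only [Set.mem_setOf_eq] at hz2 hz3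
      have hm := hmono n
      refine ⟨⟨⟨hzM, hz1⟩, ?_⟩, ?_⟩
      · simp only [Set.mem_setOf_eq]
        refine le_trans hz2 ?_
        push_cast at hm ⊢
        linarith
      · simp only [Set.mem_setOf_eq]
        refine le_trans hz3 ?_
        push_cast at hm ⊢
        linarith
    have hKne : ∀ n, (K n).Nonempty := by
      intro n
      have hη : (0:ℝ) < 1/(n+1) := by positivity
      obtain ⟨z, hz1, hz2, hz3⟩ := DeltaAux.delta_point_approx h1
        (r := r) (η := 1/(n+1)) hr0 (by rwa [hdm]) hη
      refine ⟨(z : X), ⟨⟨z.2, ?_⟩, ?_⟩, ?_⟩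
      · rw [Subtype.dist_eq, dist_eq_norm, norm_sub_rev] at hz1
        exact hz1
      · rw [Subtype.dist_eq, dist_eq_norm, norm_sub_rev] at hz2
        exact hz2.le
      · rw [Subtype.dist_eq, dist_eq_norm, hdm] at hz3
        exact hz3
    have hc1 : Continuous fun z : X => ‖z - x‖ := (continuous_id.sub continuous_const).norm
    have hc2 : Continuous fun z : X => ‖z - y‖ := (continuous_id.sub continuous_const).norm
    have hKcl : ∀ n, IsClosed (K n) := by
      intro n
      refine IsClosed.inter (IsClosed.inter (IsClosed.inter hM.isClosed ?_) ?_) ?_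
      · exact isClosed_le continuous_const hc1
      · exact isClosed_le hc1 continuous_const
      · exact isClosed_le hc2 continuous_const
    have hK0 : IsCompact (K 0) :=
      IsCompact.of_isClosed_subset hM (hKcl 0) fun z hz => hz.1.1.1
    obtain ⟨z, hz⟩ := IsCompact.nonempty_iInter_of_sequence_nonempty_isCompact_isClosed
      K hKsub hKne hK0 hKcl
    rw [Set.mem_iInter] at hz
    have hzM : z ∈ M := (hz 0).1.1.1
    have hz1 : r ≤ ‖z - x‖ := (hz 0).1.1.2
    have hz2 : ‖z - x‖ ≤ r := by
      apply le_of_forall_pos_le_add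
      intro δ hδ
      obtain ⟨n, hn⟩ := exists_nat_one_div_lt hδ
      have := (hz n).1.2
      simp only [Set.mem_setOf_eq] at this
      linarith
    have hz3 : ‖z - y‖ ≤ ‖x - y‖ - r := by
      apply le_of_forall_pos_le_add
      intro δ hδ
      obtain ⟨n, hn⟩ := exists_nat_one_div_lt hδ
      have := (hz n).2
      simp only [Set.mem_setOf_eq] at this
      linarith
    have hz4 : ‖x - y‖ - r ≤ ‖z - y‖ := by
      have htri := dist_triangle x z y
      rw [dist_eq_norm, dist_eq_norm, dist_eq_norm, norm_sub_rev x z] at htri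
      linarith
    exact ⟨z, hzM, le_antisymm hz2 hz1, le_antisymm hz3 hz4⟩
  exact ⟨⟨h12, fun h2 => h31 (h23 h2)⟩, ⟨h23, h32⟩⟩
end
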